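/- arXiv:2407.10840 — 10 statements merged into one kernel-verified Lean document; each statement's English description precedes it below -/
import Mathlib

section
/- For p ≥ 3, the function h(a) = a^p + (1-a)^{p-1}(a+p-1) on [0,1] attains its minimum on the subinterval [1/2, 1]; in fact h is strictly decreasing on (0, 1/2). -/
open Real Set

private lemma hcont (p : ℝ) (hp : 3 ≤ p) :
    ContinuousOn (fun a : ℝ => a ^ p + (1 - a) ^ (p - 1) * (a + p - 1)) (Set.Icc (0:ℝ) 1) := by
  apply ContinuousOn.add
  · intro a _
    exact (Real.continuousAt_rpow_const a p (Or.inr (by linarith))).continuousWithinAt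
  · apply ContinuousOn.mul
    · intro a _
      exact ((Real.continuousAt_rpow_const (1-a) (p-1) (Or.inr (by linarith))).comp
        (by fun_prop)).continuousWithinAt
    · fun_prop

private lemma hderiv (p : ℝ) (_hp : 3 ≤ p) {a : ℝ} (ha : a ∈ Set.Ioo (0:ℝ) (1/2)) :
    HasDerivAt (fun a : ℝ => a ^ p + (1 - a) ^ (p - 1) * (a + p - 1))
      (p * (a ^ (p-1) - (1-a) ^ (p-2) * (a + p - 2))) a := by
  obtain ⟨h0, h1⟩ := ha
  have h1a : (0:ℝ) < 1 - a := by linarith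
  have d1 : HasDerivAt (fun a : ℝ => a ^ p) (p * a ^ (p-1)) a :=
    Real.hasDerivAt_rpow_const (Or.inl (ne_of_gt h0))
  have d2 : HasDerivAt (fun a : ℝ => (1 - a) ^ (p-1)) ((-1) * (p-1) * (1-a) ^ (p-1-1)) a := by
    have := (HasDerivAt.const_sub 1 (hasDerivAt_id a)).rpow_const
      (p := p - 1) (Or.inl (ne_of_gt h1a))
    simpa using this
  have d3 : HasDerivAt (fun a : ℝ => a + p - 1) 1 a := by
    simpa using ((hasDerivAt_id a).add_const p).sub_const 1
  have d := d1.add (d2.mul d3)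
  convert d using 1
  · rfl
  · rfl
  · rfl
  have key : (1-a) ^ (p-1) = (1-a) ^ (p-2) * (1-a) := by
    rw [← Real.rpow_add_one (ne_of_gt h1a)]
    ring_nf
  have e : p - 1 - 1 = p - 2 := by ring
  rw [e, key]
  ring

private lemma hanti (p : ℝ) (hp : 3 ≤ p) :
    StrictAntiOn (fun a : ℝ => a ^ p + (1 - a) ^ (p - 1) * (a + p - 1))
      (Set.Icc (0:ℝ) (1/2)) := by
  apply strictAntiOn_of_deriv_neg (convex_Icc _ _)
  · exact (hcont p hp).mono (Set.Icc_subset_Icc le_rfl (by norm_num))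
  · intro a ha
    rw [interior_Icc] at ha
    rw [(hderiv p hp ha).deriv]
    obtain ⟨h0, h1⟩ := ha
    have h1a : a < 1 - a := by linarith
    have hlt : a ^ (p-1) < (1-a) ^ (p-2) * (a + p - 2) := by
      have s1 : a ^ (p-1) < a ^ (p-2) :=
        Real.rpow_lt_rpow_of_exponent_gt h0 (by linarith) (by linarith)
      have s2 : a ^ (p-2) < (1-a) ^ (p-2) :=
        Real.rpow_lt_rpow (le_of_lt h0) h1a (by linarith)
      have s3 : (1-a) ^ (p-2) ≤ (1-a) ^ (p-2) * (a + p - 2) := by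
        nlinarith [Real.rpow_pos_of_pos (show (0:ℝ) < 1 - a by linarith) (p-2)]
      linarith
    have hpp : (0:ℝ) < p := by linarith
    nlinarith

/-- For `p ≥ 3`, the function `h a = a^p + (1-a)^(p-1)(a+p-1)` is strictly decreasing on
`(0,1/2)` and attains its minimum over `[0,1]` on the subinterval `[1/2,1]`. -/
theorem stmt_2 (p : ℝ) (hp : 3 ≤ p) :
    StrictAntiOn (fun a : ℝ => a ^ p + (1 - a) ^ (p - 1) * (a + p - 1))
      (Set.Ioo (0:ℝ) (1/2)) ∧
    ∃ b ∈ Set.Icc (1/2:ℝ) 1, ∀ a ∈ Set.Icc (0:ℝ) 1,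
      b ^ p + (1 - b) ^ (p - 1) * (b + p - 1) ≤
        a ^ p + (1 - a) ^ (p - 1) * (a + p - 1) := by
  constructor
  · exact (hanti p hp).mono (Set.Ioo_subset_Icc_self)
  · obtain ⟨b, hb, hbmin⟩ := (isCompact_Icc (a := (1/2:ℝ)) (b := 1)).exists_isMinOn
      (Set.nonempty_Icc.mpr (by norm_num))
      ((hcont p hp).mono (Set.Icc_subset_Icc (by norm_num) le_rfl))
    refine ⟨b, hb, fun a ha => ?_⟩
    rcases le_or_gt (1/2) a with hcase | hcase
    · exact hbmin ⟨hcase, ha.2⟩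
    · have h1 : (fun a : ℝ => a ^ p + (1 - a) ^ (p - 1) * (a + p - 1)) (1/2) ≤
          (fun a : ℝ => a ^ p + (1 - a) ^ (p - 1) * (a + p - 1)) a :=
        le_of_lt (hanti p hp ⟨ha.1, le_of_lt hcase⟩ ⟨by norm_num, le_rfl⟩ hcase)
      have h2 := hbmin (Set.left_mem_Icc.mpr (by norm_num) : (1/2:ℝ) ∈ Set.Icc (1/2:ℝ) 1)
      exact le_trans h2 h1
end

section
/- For every real p ≥ 2 and every x ≥ 0, x^p - p·x + (p-1) ≥ (p-1)(1-x)². -/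
open Real

/-- For every real `p ≥ 2` and `x ≥ 0`, `x^p - p x + (p-1) ≥ (p-1)(1-x)^2`. -/
theorem stmt_3 (p x : ℝ) (hp : 2 ≤ p) (hx : 0 ≤ x) :
    (p - 1) * (1 - x) ^ 2 ≤ x ^ p - p * x + (p - 1) := by
  rcases eq_or_lt_of_le hx with h0 | h0
  · rw [← h0, Real.zero_rpow (by linarith)]
    ring_nf
    nlinarith
  · have hs : (-1 : ℝ) ≤ x - 1 := by linarith
    have hb := one_add_mul_self_le_rpow_one_add hs (p := p - 1) (by linarith)
    have hb' : 1 + (p - 1) * (x - 1) ≤ x ^ (p - 1) := by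
      simpa using hb
    have key : x * (1 + (p - 1) * (x - 1)) ≤ x ^ p := by
      calc x * (1 + (p - 1) * (x - 1)) ≤ x * x ^ (p - 1) :=
            mul_le_mul_of_nonneg_left hb' hx
        _ = x ^ p := by
            have hpe : x ^ p = x ^ (1 + (p - 1)) := by ring_nf
            rw [hpe, Real.rpow_add h0, Real.rpow_one]
    nlinarith [key]
end

section
/- For every real p ≥ 2 and every x ≥ 0, x^p + p·x + (p-1) ≥ (p/2)(1+x)². -/
open Real

/-- For every real `p ≥ 2` and `x ≥ 0`, `x^p + p x + (p-1) ≥ (p/2)(1+x)^2`. -/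
theorem stmt_4 (p x : ℝ) (hp : 2 ≤ p) (hx : 0 ≤ x) :
    (p / 2) * (1 + x) ^ 2 ≤ x ^ p + p * x + (p - 1) := by
  have h1 : (-1:ℝ) ≤ x^2 - 1 := by nlinarith
  have h2 : 1 ≤ p/2 := by linarith
  have h := one_add_mul_self_le_rpow_one_add h1 h2
  have hx2 : (1 + (x^2-1)) = x^2 := by ring
  rw [hx2] at h
  have hpow : (x^2 : ℝ) ^ (p/2) = x ^ p := by
    rw [← Real.rpow_natCast x 2, ← Real.rpow_mul hx]
    push_cast
    ring_nf
  rw [hpow] at h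
  nlinarith [h]
end

section
/- For every real p ≥ 2 and all real numbers x, y, the weight w²(p,x,y) := p(p-1)∫₀¹ s|s·y + (1-s)·x|^{p-2} ds satisfies w²(p,x,y) ≥ (p/2)·|y|^{p-2}. -/
open Real intervalIntegral

/-- Bernoulli-type inequality: for `c > 0` and `q ≥ 0`, `1 + q(c-1)/c ≤ c^q`. -/
lemma bern_aux (c q : ℝ) (hc : 0 < c) (hq : 0 ≤ q) :
    1 + q * ((c - 1) / c) ≤ c ^ q := by
  have hlog : (c - 1) / c ≤ Real.log c := by
    have h := Real.log_le_sub_one_of_pos (inv_pos.2 hc)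
    rw [Real.log_inv] at h
    have he : (c - 1) / c = 1 - c⁻¹ := by field_simp
    linarith
  have h2 : q * ((c-1)/c) ≤ q * Real.log c := mul_le_mul_of_nonneg_left hlog hq
  have h3 : q * Real.log c + 1 ≤ Real.exp (q * Real.log c) := Real.add_one_le_exp _
  have h4 : c ^ q = Real.exp (q * Real.log c) := by
    rw [Real.rpow_def_of_pos hc, mul_comm]
  linarith [h4 ▸ h3]

/-- Core algebraic inequality. -/
lemma star_aux (q r : ℝ) (hq : 0 ≤ q) (hr0 : 0 < r) (hr1 : r < 1) :
    (q + 2) / 2 * r ^ q ≤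
      (1 - r) ^ (q + 2) + (q + 1) * r ^ (q + 2) + (q + 2) * (1 - r) * r ^ (q + 1) := by
  have ht0 : 0 < 1 - r := by linarith
  have hc : 0 < (1 - r) / r := by positivity
  have hb := bern_aux ((1 - r) / r) q hc hq
  have hcq : ((1 - r) / r) ^ q = (1 - r) ^ q / r ^ q :=
    Real.div_rpow ht0.le hr0.le q
  have hrq : 0 < r ^ q := Real.rpow_pos_of_pos hr0 q
  have htq : 0 < (1 - r) ^ q := Real.rpow_pos_of_pos ht0 q
  -- rewrite powers
  have e1 : (1 - r) ^ (q + 2) = (1 - r) ^ q * (1 - r) ^ 2 := by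
    rw [← Real.rpow_natCast (1 - r) 2, ← Real.rpow_add ht0]
    norm_num
  have e2 : r ^ (q + 2) = r ^ q * r ^ 2 := by
    rw [← Real.rpow_natCast r 2, ← Real.rpow_add hr0]
    norm_num
  have e3 : r ^ (q + 1) = r ^ q * r := by
    rw [Real.rpow_add hr0, Real.rpow_one]
  -- Bernoulli with the explicit value
  have hval : ((1 - r) / r - 1) / ((1 - r) / r) = (1 - 2 * r) / (1 - r) := by
    field_simp
    ring
  rw [hval, hcq] at hb
  -- so (1-r)^q ≥ r^q * (1 + q*(1-2r)/(1-r))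
  have hb2 : r ^ q * (1 + q * ((1 - 2 * r) / (1 - r))) ≤ (1 - r) ^ q := by
    calc r ^ q * (1 + q * ((1 - 2 * r) / (1 - r))) ≤ r ^ q * ((1 - r) ^ q / r ^ q) :=
          mul_le_mul_of_nonneg_left hb hrq.le
      _ = (1 - r) ^ q := by field_simp
  -- multiply by (1-r)^2 and conclude
  have he : (1 + q * ((1 - 2 * r) / (1 - r))) * (1 - r) ^ 2
      = (1 - r) ^ 2 + q * (1 - 2 * r) * (1 - r) := by
    field_simp
  have hb3 : r ^ q * ((1 - r) ^ 2 + q * (1 - 2 * r) * (1 - r)) ≤ (1 - r) ^ q * (1 - r) ^ 2 := by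
    calc r ^ q * ((1 - r) ^ 2 + q * (1 - 2 * r) * (1 - r))
        = r ^ q * ((1 + q * ((1 - 2 * r) / (1 - r))) * (1 - r) ^ 2) := by rw [he]
      _ = r ^ q * (1 + q * ((1 - 2 * r) / (1 - r))) * (1 - r) ^ 2 := by ring
      _ ≤ (1 - r) ^ q * (1 - r) ^ 2 := mul_le_mul_of_nonneg_right hb2 (sq_nonneg _)
  rw [e1, e2, e3]
  nlinarith [hb3, hrq.le, mul_nonneg (mul_nonneg hq hrq.le) (sq_nonneg (1 - 2 * r))]

lemma cont_line (x y : ℝ) (q : ℝ) (hq : 0 ≤ q) :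
    Continuous fun s : ℝ => s * |s * y + (1 - s) * x| ^ q := by
  have hl : Continuous fun s : ℝ => s * y + (1 - s) * x := by continuity
  exact continuous_id.mul (hl.abs.rpow_const fun s => Or.inr hq)

/-- The case `x*y ≥ 0`. -/
lemma same_sign_case (p x y : ℝ) (hp : 2 ≤ p) (hxy : 0 ≤ x * y) :
    (p / 2) * |y| ^ (p - 2) ≤
      p * (p - 1) * ∫ s in (0:ℝ)..1, s * |s * y + (1 - s) * x| ^ (p - 2) := by
  set q := p - 2 with hqdef
  have hq : 0 ≤ q := by rw [hqdef]; linarith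
  have hq1 : (0:ℝ) ≤ q + 1 := by linarith
  -- pointwise bound
  have hpt : ∀ s ∈ Set.Icc (0:ℝ) 1,
      s ^ (q+1) * |y| ^ q ≤ s * |s * y + (1 - s) * x| ^ q := by
    intro s hs
    rcases eq_or_lt_of_le hs.1 with h0 | h0
    · rw [← h0]
      rw [Real.zero_rpow (by linarith : q + 1 ≠ 0)]
      simp
    · have habs : s * |y| ≤ |s * y + (1 - s) * x| := by
        rw [← Real.sqrt_sq_eq_abs (s * y + (1 - s) * x)]
        have : s * |y| = Real.sqrt ((s * y)^2) := by
          rw [Real.sqrt_sq_eq_abs, abs_mul, abs_of_nonneg hs.1]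
        rw [this]
        apply Real.sqrt_le_sqrt
        nlinarith [mul_nonneg (mul_nonneg hs.1 (by linarith [hs.2] : (0:ℝ) ≤ 1 - s)) hxy,
          sq_nonneg ((1 - s) * x)]
      have e : s ^ (q+1) * |y| ^ q = s * (s * |y|) ^ q := by
        rw [Real.mul_rpow h0.le (abs_nonneg y), Real.rpow_add h0, Real.rpow_one]
        ring
      rw [e]
      exact mul_le_mul_of_nonneg_left
        (Real.rpow_le_rpow (mul_nonneg h0.le (abs_nonneg y)) habs hq) h0.le
  -- integrability
  have hf := cont_line x y q hq
  have hg : Continuous fun s : ℝ => s ^ (q+1) * |y| ^ q :=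
    (continuous_id.rpow_const fun s => Or.inr hq1).mul continuous_const
  have hmono := intervalIntegral.integral_mono_on (μ := MeasureTheory.volume) zero_le_one
    (hg.intervalIntegrable 0 1) (hf.intervalIntegrable 0 1) hpt
  have hgval : (∫ s in (0:ℝ)..1, s ^ (q+1) * |y| ^ q) = (1 / (q + 2)) * |y| ^ q := by
    rw [intervalIntegral.integral_mul_const, integral_rpow (Or.inl (by linarith : (-1:ℝ) < q + 1))]
    rw [Real.one_rpow, Real.zero_rpow (by linarith : q + 1 + 1 ≠ 0)]
    rw [show q + 1 + 1 = q + 2 by ring]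
    ring
  rw [hgval] at hmono
  have hyq : (0:ℝ) ≤ |y| ^ q := Real.rpow_nonneg (abs_nonneg y) q
  have hppos : (0:ℝ) < p := by linarith
  have hkey : (p / 2) * |y| ^ q ≤ p * (p - 1) * ((1 / (q + 2)) * |y| ^ q) := by
    have : p * (p - 1) * ((1 / (q + 2)) * |y| ^ q) = (p - 1) * |y| ^ q := by
      rw [show q + 2 = p by rw [hqdef]; ring]
      field_simp
    rw [this]
    have : p / 2 ≤ p - 1 := by linarith
    exact mul_le_mul_of_nonneg_right this hyq
  calc (p / 2) * |y| ^ q ≤ p * (p - 1) * ((1 / (q + 2)) * |y| ^ q) := hkey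
    _ ≤ p * (p - 1) * ∫ s in (0:ℝ)..1, s * |s * y + (1 - s) * x| ^ q :=
        mul_le_mul_of_nonneg_left hmono (by nlinarith)

/-- The mixed-sign case `x < 0 < y`. -/
lemma mixed_case (p x y : ℝ) (hp : 2 ≤ p) (hx : x < 0) (hy : 0 < y) :
    (p / 2) * |y| ^ (p - 2) ≤
      p * (p - 1) * ∫ s in (0:ℝ)..1, s * |s * y + (1 - s) * x| ^ (p - 2) := by
  set q := p - 2 with hqdef
  have hq : 0 ≤ q := by rw [hqdef]; linarith
  have hd : (0:ℝ) < y - x := by linarith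
  set d := y - x with hddef
  set t := -x / d with htdef
  have ht0 : 0 < t := div_pos (by linarith) hd
  have ht1 : t < 1 := by rw [htdef, div_lt_one hd]; linarith
  set r := 1 - t with hrdef
  have hr0 : 0 < r := by rw [hrdef]; linarith
  have hr1 : r < 1 := by rw [hrdef]; linarith
  have hrt : 1 - r = t := by rw [hrdef]; ring
  have hline : ∀ s : ℝ, s * y + (1 - s) * x = d * (s - t) := by
    intro s
    rw [htdef, hddef]
    field_simp [(by linarith : (0:ℝ) < y - x).ne']
    ring
  have habs : ∀ s : ℝ, |s * y + (1 - s) * x| = d * |s - t| := by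
    intro s
    rw [hline s, abs_mul, abs_of_pos hd]
  -- rewrite the integral
  have hIeq : (∫ s in (0:ℝ)..1, s * |s * y + (1 - s) * x| ^ q)
      = d ^ q * ∫ s in (0:ℝ)..1, s * |s - t| ^ q := by
    rw [← intervalIntegral.integral_const_mul]
    apply intervalIntegral.integral_congr
    intro s _
    show s * |s * y + (1 - s) * x| ^ q = d ^ q * (s * |s - t| ^ q)
    rw [habs s, Real.mul_rpow hd.le (abs_nonneg _)]
    ring
  have hcont : Continuous fun s : ℝ => s * |s - t| ^ q :=
    continuous_id.mul (((continuous_id.sub continuous_const).abs).rpow_const fun s => Or.inr hq)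
  have hsplit : (∫ s in (0:ℝ)..1, s * |s - t| ^ q)
      = (∫ s in (0:ℝ)..t, s * |s - t| ^ q) + ∫ s in t..1, s * |s - t| ^ q :=
    (intervalIntegral.integral_add_adjacent_intervals
      (hcont.intervalIntegrable 0 t) (hcont.intervalIntegrable t 1)).symm
  have hpow : Continuous fun u : ℝ => u ^ q := by
    have h := continuous_id.rpow_const (fun s : ℝ => Or.inr hq)
    exact h
  have hpow1 : Continuous fun u : ℝ => u ^ (q + 1) := by
    have h := continuous_id.rpow_const (fun s : ℝ => Or.inr (by linarith : (0:ℝ) ≤ q + 1))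
    exact h
  -- first piece
  have hJ1 : (∫ s in (0:ℝ)..t, s * |s - t| ^ q)
      = t * (t ^ (q+1) / (q+1)) - t ^ (q+2) / (q+2) := by
    have c1 : (∫ s in (0:ℝ)..t, s * |s - t| ^ q)
        = ∫ s in (0:ℝ)..t, (fun u => (t - u) * u ^ q) (t - s) := by
      apply intervalIntegral.integral_congr
      intro s hs
      rw [Set.uIcc_of_le ht0.le] at hs
      show s * |s - t| ^ q = (t - (t - s)) * (t - s) ^ q
      have habs2 : |s - t| = t - s := by rw [abs_of_nonpos (by linarith [hs.2])]; ring
      rw [habs2]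
      ring_nf
    rw [c1, intervalIntegral.integral_comp_sub_left (fun u => (t - u) * u ^ q) t]
    simp only [sub_self, sub_zero]
    have c2 : (∫ u in (0:ℝ)..t, (t - u) * u ^ q)
        = ∫ u in (0:ℝ)..t, (t * u ^ q - u ^ (q+1)) := by
      apply intervalIntegral.integral_congr
      intro u hu
      rw [Set.uIcc_of_le ht0.le] at hu
      show (t - u) * u ^ q = t * u ^ q - u ^ (q + 1)
      rcases eq_or_lt_of_le hu.1 with h0 | h0
      · rw [← h0]
        rw [Real.zero_rpow (by linarith : q + 1 ≠ 0)]
        ring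
      · rw [Real.rpow_add_one h0.ne']
        ring
    rw [c2]
    have hint1 : IntervalIntegrable (fun u : ℝ => t * u ^ q) MeasureTheory.volume 0 t :=
      (continuous_const.mul hpow).intervalIntegrable 0 t
    have hint2 : IntervalIntegrable (fun u : ℝ => u ^ (q + 1)) MeasureTheory.volume 0 t :=
      hpow1.intervalIntegrable 0 t
    rw [intervalIntegral.integral_sub hint1 hint2]
    rw [intervalIntegral.integral_const_mul,
      integral_rpow (Or.inl (by linarith : (-1:ℝ) < q)),
      integral_rpow (Or.inl (by linarith : (-1:ℝ) < q + 1))]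
    rw [Real.zero_rpow (by linarith : q + 1 ≠ 0), Real.zero_rpow (by linarith : q + 1 + 1 ≠ 0)]
    rw [show q + 1 + 1 = q + 2 by ring]
    ring
  -- second piece
  have hJ2 : (∫ s in t..1, s * |s - t| ^ q)
      = r ^ (q+2) / (q+2) + t * (r ^ (q+1) / (q+1)) := by
    have c1 : (∫ s in t..1, s * |s - t| ^ q)
        = ∫ s in t..1, (fun u => (u + t) * u ^ q) (s - t) := by
      apply intervalIntegral.integral_congr
      intro s hs
      rw [Set.uIcc_of_le ht1.le] at hs
      show s * |s - t| ^ q = (s - t + t) * (s - t) ^ q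
      have habs2 : |s - t| = s - t := abs_of_nonneg (by linarith [hs.1])
      rw [habs2]
      ring_nf
    rw [c1, intervalIntegral.integral_comp_sub_right (fun u => (u + t) * u ^ q) t]
    simp only [sub_self]
    have c2 : (∫ u in (0:ℝ)..(1 - t), (u + t) * u ^ q)
        = ∫ u in (0:ℝ)..(1 - t), (u ^ (q+1) + t * u ^ q) := by
      apply intervalIntegral.integral_congr
      intro u hu
      rw [Set.uIcc_of_le (by linarith : (0:ℝ) ≤ 1 - t)] at hu
      show (u + t) * u ^ q = u ^ (q + 1) + t * u ^ q
      rcases eq_or_lt_of_le hu.1 with h0 | h0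
      · rw [← h0]
        rw [Real.zero_rpow (by linarith : q + 1 ≠ 0)]
        ring
      · rw [Real.rpow_add_one h0.ne']
        ring
    rw [c2]
    have hint1 : IntervalIntegrable (fun u : ℝ => u ^ (q + 1)) MeasureTheory.volume 0 (1 - t) :=
      hpow1.intervalIntegrable 0 (1 - t)
    have hint2 : IntervalIntegrable (fun u : ℝ => t * u ^ q) MeasureTheory.volume 0 (1 - t) :=
      (continuous_const.mul hpow).intervalIntegrable 0 (1 - t)
    rw [intervalIntegral.integral_add hint1 hint2]
    rw [intervalIntegral.integral_const_mul,
      integral_rpow (Or.inl (by linarith : (-1:ℝ) < q)),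
      integral_rpow (Or.inl (by linarith : (-1:ℝ) < q + 1))]
    rw [Real.zero_rpow (by linarith : q + 1 ≠ 0), Real.zero_rpow (by linarith : q + 1 + 1 ≠ 0)]
    rw [show q + 1 + 1 = q + 2 by ring, show (1:ℝ) - t = r by rw [hrdef]]
    ring
  -- |y|^q = d^q * r^q
  have hyd : y = d * r := by
    rw [hrdef, htdef, hddef]
    field_simp [(by linarith : (0:ℝ) < y - x).ne']
    ring
  have hyq : |y| ^ q = d ^ q * r ^ q := by
    rw [abs_of_pos hy, hyd, Real.mul_rpow hd.le hr0.le]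
  -- power identities
  have ht2 : t ^ (q+2) = t ^ (q+1) * t := by
    rw [show q + 2 = (q+1) + 1 by ring, Real.rpow_add_one ht0.ne']
  have hq1p : (0:ℝ) < q + 1 := by linarith
  have hq2p : (0:ℝ) < q + 2 := by linarith
  have hstar := star_aux q r hq hr0 hr1
  rw [hrt] at hstar
  -- assemble
  have hV : p * (p - 1) * ((t * (t ^ (q+1) / (q+1)) - t ^ (q+2) / (q+2))
      + (r ^ (q+2) / (q+2) + t * (r ^ (q+1) / (q+1))))
      = t ^ (q+2) + (q + 1) * r ^ (q+2) + (q + 2) * t * r ^ (q+1) := by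
    have hpq : p = q + 2 := by rw [hqdef]; ring
    rw [hpq, ht2]
    field_simp
    ring
  have hkey : (p / 2) * r ^ q ≤ p * (p - 1) * ((t * (t ^ (q+1) / (q+1)) - t ^ (q+2) / (q+2))
      + (r ^ (q+2) / (q+2) + t * (r ^ (q+1) / (q+1)))) := by
    rw [hV]
    have hpq : p = q + 2 := by rw [hqdef]; ring
    rw [hpq]
    linarith [hstar]
  rw [hIeq, hsplit, hJ1, hJ2, hyq]
  have hdq : (0:ℝ) ≤ d ^ q := Real.rpow_nonneg hd.le q
  calc (p / 2) * (d ^ q * r ^ q) = d ^ q * ((p / 2) * r ^ q) := by ring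
    _ ≤ d ^ q * (p * (p - 1) * ((t * (t ^ (q+1) / (q+1)) - t ^ (q+2) / (q+2))
        + (r ^ (q+2) / (q+2) + t * (r ^ (q+1) / (q+1))))) :=
        mul_le_mul_of_nonneg_left hkey hdq
    _ = p * (p - 1) * (d ^ q * ((t * (t ^ (q+1) / (q+1)) - t ^ (q+2) / (q+2))
        + (r ^ (q+2) / (q+2) + t * (r ^ (q+1) / (q+1))))) := by ring

/-- For every real `p ≥ 2` and all real `x, y`,
`p(p-1) ∫₀¹ s |s y + (1-s) x|^(p-2) ds ≥ (p/2) |y|^(p-2)`. -/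
theorem stmt_5 (p x y : ℝ) (hp : 2 ≤ p) :
    (p / 2) * |y| ^ (p - 2) ≤
      p * (p - 1) * ∫ s in (0:ℝ)..1, s * |s * y + (1 - s) * x| ^ (p - 2) := by
  rcases le_or_gt 0 (x * y) with h | h
  · exact same_sign_case p x y hp h
  · rcases lt_trichotomy y 0 with hy | hy | hy
    · have hx : 0 < x := by nlinarith
      have := mixed_case p (-x) (-y) hp (by linarith) (by linarith)
      have heq : ∀ s : ℝ, |s * -y + (1 - s) * -x| = |s * y + (1 - s) * x| := by
        intro s
        rw [show s * -y + (1 - s) * -x = -(s * y + (1 - s) * x) by ring, abs_neg]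
      simp only [heq, abs_neg] at this
      exact this
    · rw [hy] at h; simp at h
    · have hx : x < 0 := by nlinarith
      exact mixed_case p x y hp hx hy
end

section
/- For p ≥ 3, the constant λ_p := min_{a∈[0,1]} (a^p + (1-a)^{p-1}(a+p-1)) satisfies 1/2^p ≤ λ_p ≤ p/2^{p-1}. -/
open Real Set

/-- For `p ≥ 3`, `λ_p := min_{a ∈ [0,1]} (a^p + (1-a)^(p-1)(a+p-1))`
satisfies `1/2^p ≤ λ_p ≤ p/2^(p-1)`. -/
theorem stmt_7 (p : ℝ) (hp : 3 ≤ p) :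
    sInf ((fun a : ℝ => a ^ p + (1 - a) ^ (p - 1) * (a + p - 1)) '' Set.Icc 0 1) ∈
      Set.Icc (1 / 2 ^ p) (p / 2 ^ (p - 1)) := by
  set f : ℝ → ℝ := fun a => a ^ p + (1 - a) ^ (p - 1) * (a + p - 1) with hf
  have hhalf : (0:ℝ) < 1/2 := by norm_num
  have hdiv : (1:ℝ) / 2 ^ p = (1/2 : ℝ) ^ p := by
    rw [Real.div_rpow (by norm_num) (by norm_num), Real.one_rpow]
  have hdiv1 : (1:ℝ) / 2 ^ (p-1) = (1/2 : ℝ) ^ (p-1) := by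
    rw [Real.div_rpow (by norm_num) (by norm_num), Real.one_rpow]
  have h4 : (1/2:ℝ) ^ (p-1) * (1/2) = (1/2:ℝ) ^ p := by
    rw [← Real.rpow_add_one (by norm_num : (1/2:ℝ) ≠ 0), sub_add_cancel]
  -- lower bound on every element
  have hkey : ∀ a ∈ Set.Icc (0:ℝ) 1, 1 / 2 ^ p ≤ f a := by
    intro a ha
    obtain ⟨ha0, ha1⟩ := ha
    rw [hdiv]
    rcases le_total (1/2 : ℝ) a with h | h
    · have h1 : (1/2:ℝ) ^ p ≤ a ^ p :=
        Real.rpow_le_rpow (by norm_num) h (by linarith)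
      have h2 : 0 ≤ (1-a) ^ (p-1) * (a + p - 1) :=
        mul_nonneg (Real.rpow_nonneg (by linarith) _) (by linarith)
      simp only [hf]
      linarith
    · have h1 : 0 ≤ a ^ p := Real.rpow_nonneg ha0 _
      have h3 : (1/2:ℝ) ^ (p-1) ≤ (1-a) ^ (p-1) :=
        Real.rpow_le_rpow (by norm_num) (by linarith) (by linarith)
      have h5 : (1/2:ℝ) ^ (p-1) * (a + p - 1) ≤ (1-a) ^ (p-1) * (a + p - 1) :=
        mul_le_mul_of_nonneg_right h3 (by linarith)
      have h6 : (1/2:ℝ) ^ (p-1) * (1/2) ≤ (1/2:ℝ) ^ (p-1) * (a + p - 1) :=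
        mul_le_mul_of_nonneg_left (by linarith) (Real.rpow_nonneg (by norm_num) _)
      simp only [hf]
      linarith
  have hmem : f (1/2) ∈ f '' Set.Icc (0:ℝ) 1 :=
    ⟨1/2, by constructor <;> norm_num, rfl⟩
  have hne : (f '' Set.Icc (0:ℝ) 1).Nonempty := ⟨_, hmem⟩
  have hbdd : BddBelow (f '' Set.Icc (0:ℝ) 1) := ⟨1 / 2 ^ p, by
    rintro x ⟨a, ha, rfl⟩
    exact hkey a ha⟩
  have hval : f (1/2) = p / 2 ^ (p-1) := by
    have : f (1/2) = (1/2:ℝ) ^ p + (1/2:ℝ) ^ (p-1) * (1/2 + p - 1) := by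
      simp only [hf]
      norm_num
    rw [this, ← h4, div_eq_mul_one_div p ((2:ℝ) ^ (p-1)), hdiv1]
    ring
  constructor
  · exact le_csInf hne (by rintro x ⟨a, ha, rfl⟩; exact hkey a ha)
  · calc sInf (f '' Set.Icc (0:ℝ) 1) ≤ f (1/2) := csInf_le hbdd hmem
      _ = p / 2 ^ (p-1) := hval
end

section
/- Let p ≥ 2, let D be a measurable set, and let f, g ∈ L^p(D). Define w(p,f,g)² = p(p-1)∫₀¹ s|s·g + (1-s)·f|^{p-2} ds pointwise. Then ∫_D w(p,f,g)²·(f-g)² dx = ‖f‖_{L^p}^p + (p-1)‖g‖_{L^p}^p - p∫_D |g|^{p-2} g · f dx. -/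
open MeasureTheory Real intervalIntegral Filter Topology

lemma hasDerivAt_abs_rpow_mul_self {q : ℝ} (hq : 0 ≤ q) (x : ℝ) :
    HasDerivAt (fun y : ℝ => |y| ^ q * y) ((q + 1) * |x| ^ q) x := by
  rcases lt_trichotomy x 0 with hx | rfl | hx
  · have hne : (-x) ≠ 0 := by simp [hx.ne]
    have h1 : HasDerivAt (fun y : ℝ => (-y) ^ (q + 1))
        (((q + 1) * (-x) ^ (q + 1 - 1)) * (-1)) x :=
      (Real.hasDerivAt_rpow_const (Or.inl hne)).comp x (hasDerivAt_neg x)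
    have h3 : HasDerivAt (fun y : ℝ => -((-y) ^ (q + 1))) ((q + 1) * |x| ^ q) x := by
      refine h1.neg.congr_deriv ?_
      rw [abs_of_neg hx]
      ring_nf
    apply h3.congr_of_eventuallyEq
    filter_upwards [eventually_lt_nhds hx] with y hy
    rw [abs_of_neg hy, Real.rpow_add (by linarith : (0:ℝ) < -y), Real.rpow_one]
    ring
  · rcases hq.eq_or_lt with rfl | hq'
    · have : HasDerivAt (fun y : ℝ => |y| ^ (0:ℝ) * y) 1 (0:ℝ) := by
        exact (hasDerivAt_id (0:ℝ)).congr_of_eventuallyEq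
          (Filter.Eventually.of_forall fun y => by simp)
      simpa [Real.rpow_zero] using this
    · rw [abs_zero, Real.zero_rpow hq'.ne', mul_zero]
      rw [hasDerivAt_iff_tendsto_slope]
      have heq : (fun y : ℝ => |y| ^ q) =ᶠ[𝓝[≠] (0:ℝ)]
          slope (fun y : ℝ => |y| ^ q * y) 0 := by
        filter_upwards [self_mem_nhdsWithin] with y hy
        have hy' : y ≠ 0 := by simpa using hy
        rw [slope_def_field]
        field_simp
        simp
      have hcont : Filter.Tendsto (fun y : ℝ => |y| ^ q) (𝓝 (0:ℝ)) (𝓝 (0:ℝ)) := by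
        have h := (continuous_abs.continuousAt (x := (0:ℝ))).rpow_const (Or.inr hq)
        simpa [Real.zero_rpow hq'.ne'] using h.tendsto
      exact Filter.Tendsto.congr' heq (hcont.mono_left nhdsWithin_le_nhds)
  · have h1 : HasDerivAt (fun y : ℝ => y ^ (q + 1)) ((q + 1) * x ^ (q + 1 - 1)) x :=
      Real.hasDerivAt_rpow_const (Or.inl hx.ne')
    have h3 : HasDerivAt (fun y : ℝ => y ^ (q + 1)) ((q + 1) * |x| ^ q) x := by
      convert h1 using 2
      rw [abs_of_pos hx]; ring_nf
    apply h3.congr_of_eventuallyEq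
    filter_upwards [eventually_gt_nhds hx] with y hy
    rw [abs_of_pos hy, Real.rpow_add hy, Real.rpow_one]

lemma abs_rpow_id_sq {p : ℝ} (hp : 2 ≤ p) (y : ℝ) :
    |y| ^ (p - 2) * y * y = |y| ^ p := by
  rw [mul_assoc, ← abs_mul_abs_self y,
    show |y| * |y| = |y| ^ (2:ℝ) by
      rw [show (2:ℝ) = ((2:ℕ):ℝ) by norm_num, Real.rpow_natCast]; ring,
    ← Real.rpow_add' (abs_nonneg y) (by simp; linarith : p - 2 + 2 ≠ 0)]
  norm_num

lemma key_identity {p : ℝ} (hp : 2 ≤ p) (a b : ℝ) :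
    (p * (p - 1) * ∫ s in (0:ℝ)..1, s * |s * b + (1 - s) * a| ^ (p - 2)) * (a - b) ^ 2
      = |a| ^ p + (p - 1) * |b| ^ p - p * (|b| ^ (p - 2) * b * a) := by
  have hq : (0:ℝ) ≤ p - 2 := by linarith
  have hp0 : p ≠ 0 := by linarith
  have hp1 : p - 1 ≠ 0 := by linarith
  rcases eq_or_ne a b with rfl | hab
  · rw [abs_rpow_id_sq hp a]; ring
  have hd : a - b ≠ 0 := sub_ne_zero.mpr hab
  set c : ℝ → ℝ := fun s => (1 - s) * b + s * a with hc_def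
  have hc_cont : Continuous c := by fun_prop
  have hcont2 : Continuous fun s => |c s| ^ (p - 2) :=
    (Real.continuous_rpow_const hq).comp (continuous_abs.comp hc_cont)
  have hc : ∀ s : ℝ, HasDerivAt c (a - b) s := by
    intro s
    have h : HasDerivAt (fun y : ℝ => b + (a - b) * y) (a - b) s := by
      simpa using ((hasDerivAt_id s).const_mul (a - b)).const_add b
    exact h.congr_of_eventuallyEq
      (Filter.Eventually.of_forall (fun y => by simp only [hc_def]; ring))
  -- derivative of V s = |c s|^(p-2) * c s
  have hV : ∀ s : ℝ, HasDerivAt (fun t => |c t| ^ (p - 2) * c t)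
      ((p - 1) * |c s| ^ (p - 2) * (a - b)) s := by
    intro s
    have h := (hasDerivAt_abs_rpow_mul_self hq (c s)).comp s (hc s)
    refine h.congr_deriv ?_
    ring
  -- derivative of W s = |c s|^p
  have hW : ∀ s : ℝ, HasDerivAt (fun t => |c t| ^ p)
      ((p * |c s| ^ (p - 2) * c s) * (a - b)) s := by
    intro s
    exact (hasDerivAt_abs_rpow (c s) (by linarith : 1 < p)).comp s (hc s)
  have hc0 : c 0 = b := by simp [hc_def]
  have hc1 : c 1 = a := by simp [hc_def]
  -- FTC : ∫ V
  have hVint : ∫ s in (0:ℝ)..1, |c s| ^ (p - 2) * c s = (|a| ^ p - |b| ^ p) / (p * (a - b)) := by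
    have hderiv : ∀ s ∈ Set.uIcc (0:ℝ) 1,
        HasDerivAt (fun t => |c t| ^ p / (p * (a - b))) (|c s| ^ (p - 2) * c s) s := by
      intro s _
      have h := (hW s).div_const (p * (a - b))
      refine h.congr_deriv ?_
      rw [div_eq_iff (mul_ne_zero hp0 hd)]
      ring
    have hint : IntervalIntegrable (fun s => |c s| ^ (p - 2) * c s) volume 0 1 :=
      (hcont2.mul hc_cont).intervalIntegrable 0 1
    rw [intervalIntegral.integral_eq_sub_of_hasDerivAt hderiv hint, hc0, hc1]
    ring
  -- substitution s ↦ 1 - s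
  have hsub : (∫ s in (0:ℝ)..1, s * |s * b + (1 - s) * a| ^ (p - 2))
      = ∫ s in (0:ℝ)..1, (1 - s) * |c s| ^ (p - 2) := by
    have h := intervalIntegral.integral_comp_sub_left (a := (0:ℝ)) (b := 1)
      (fun s => s * |s * b + (1 - s) * a| ^ (p - 2)) 1
    norm_num at h
    rw [← h]
  -- integration by parts
  have hparts : (∫ s in (0:ℝ)..1, (1 - s) * |c s| ^ (p - 2))
      = -(|b| ^ (p - 2) * b / ((p - 1) * (a - b)))
        + (∫ s in (0:ℝ)..1, (|c s| ^ (p - 2) * c s) / ((p - 1) * (a - b))) := by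
    have hu : ∀ s ∈ Set.uIcc (0:ℝ) 1, HasDerivAt (fun t : ℝ => 1 - t) (-1 : ℝ) s := by
      intro s _
      simpa using (hasDerivAt_id s).const_sub 1
    have hv : ∀ s ∈ Set.uIcc (0:ℝ) 1,
        HasDerivAt (fun t => (|c t| ^ (p - 2) * c t) / ((p - 1) * (a - b)))
          (|c s| ^ (p - 2)) s := by
      intro s _
      have h := (hV s).div_const ((p - 1) * (a - b))
      refine h.congr_deriv ?_
      rw [div_eq_iff (mul_ne_zero hp1 hd)]
      ring
    have hu' : IntervalIntegrable (fun _ : ℝ => (-1 : ℝ)) volume 0 1 :=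
      intervalIntegrable_const
    have hv' : IntervalIntegrable (fun s => |c s| ^ (p - 2)) volume 0 1 :=
      hcont2.intervalIntegrable 0 1
    have h := intervalIntegral.integral_mul_deriv_eq_deriv_mul hu hv hu' hv'
    rw [h, hc0, hc1]
    have : (∫ s in (0:ℝ)..1, (-1 : ℝ) * ((|c s| ^ (p - 2) * c s) / ((p - 1) * (a - b))))
        = -∫ s in (0:ℝ)..1, (|c s| ^ (p - 2) * c s) / ((p - 1) * (a - b)) := by
      rw [← intervalIntegral.integral_neg]
      congr 1; funext s; ring
    rw [this]
    ring
  calc (p * (p - 1) * ∫ s in (0:ℝ)..1, s * |s * b + (1 - s) * a| ^ (p - 2)) * (a - b) ^ 2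
      = (p * (p - 1) * (-(|b| ^ (p - 2) * b / ((p - 1) * (a - b)))
          + ((|a| ^ p - |b| ^ p) / (p * (a - b))) / ((p - 1) * (a - b)))) * (a - b) ^ 2 := by
        rw [hsub, hparts, intervalIntegral.integral_div, hVint]
    _ = |a| ^ p - |b| ^ p - p * (|b| ^ (p - 2) * b) * (a - b) := by
        field_simp
        ring
    _ = |a| ^ p + (p - 1) * |b| ^ p - p * (|b| ^ (p - 2) * b * a) := by
        linear_combination p * (abs_rpow_id_sq hp b)

/-- The `L^p` identity: with `w(p,f,g)² = p(p-1)∫₀¹ s |s g + (1-s) f|^(p-2) ds` pointwise,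
`∫_D w² (f-g)² = ‖f‖_p^p + (p-1)‖g‖_p^p - p ∫_D |g|^(p-2) g f`. -/
theorem stmt_9 (N : ℕ) (D : Set (Fin N → ℝ)) (hD : MeasurableSet D)
    (p : ℝ) (hp : 2 ≤ p) (f g : (Fin N → ℝ) → ℝ)
    (hf : MemLp f (ENNReal.ofReal p) (volume.restrict D))
    (hg : MemLp g (ENNReal.ofReal p) (volume.restrict D)) :
    ∫ x in D,
        (p * (p - 1) * ∫ s in (0:ℝ)..1, s * |s * g x + (1 - s) * f x| ^ (p - 2)) *
          (f x - g x) ^ 2 =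
      (∫ x in D, |f x| ^ p) + (p - 1) * (∫ x in D, |g x| ^ p) -
        p * ∫ x in D, |g x| ^ (p - 2) * g x * f x := by
  have hp0 : (0:ℝ) < p := by linarith
  have hq : (0:ℝ) ≤ p - 2 := by linarith
  have hne0 : ENNReal.ofReal p ≠ 0 := by simp [ENNReal.ofReal_eq_zero]; linarith
  have hnetop : ENNReal.ofReal p ≠ ⊤ := ENNReal.ofReal_ne_top
  have htr : (ENNReal.ofReal p).toReal = p := ENNReal.toReal_ofReal hp0.le
  have hA : Integrable (fun x => |f x| ^ p) (volume.restrict D) := by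
    have := hf.integrable_norm_rpow hne0 hnetop
    simpa [htr, Real.norm_eq_abs] using this
  have hB : Integrable (fun x => |g x| ^ p) (volume.restrict D) := by
    have := hg.integrable_norm_rpow hne0 hnetop
    simpa [htr, Real.norm_eq_abs] using this
  have hC : Integrable (fun x => |g x| ^ (p - 2) * g x * f x) (volume.restrict D) := by
    apply Integrable.mono' (hA.add hB)
    · exact ((((Real.continuous_rpow_const hq).comp continuous_abs).comp_aestronglyMeasurable
        hg.1).mul hg.1).mul hf.1
    · apply ae_of_all
      intro x
      have hFn : (0:ℝ) ≤ |f x| := abs_nonneg _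
      have hGn : (0:ℝ) ≤ |g x| := abs_nonneg _
      have hrn : (0:ℝ) ≤ |g x| ^ (p - 2) := Real.rpow_nonneg hGn _
      have hnorm : ‖|g x| ^ (p - 2) * g x * f x‖ = |g x| ^ (p - 2) * |g x| * |f x| := by
        rw [Real.norm_eq_abs, abs_mul, abs_mul, abs_of_nonneg hrn]
      rw [hnorm]
      rcases le_total (|f x|) (|g x|) with h | h
      · have h1 : |g x| ^ (p - 2) * |g x| * |f x| ≤ |g x| ^ (p - 2) * |g x| * |g x| := by
          gcongr
        have h2 : |g x| ^ (p - 2) * |g x| * |g x| = |g x| ^ p := by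
          have := abs_rpow_id_sq hp (|g x|)
          rwa [abs_abs] at this
        calc |g x| ^ (p - 2) * |g x| * |f x| ≤ |g x| ^ p := h2 ▸ h1
          _ ≤ |f x| ^ p + |g x| ^ p := le_add_of_nonneg_left (Real.rpow_nonneg hFn _)
      · have h1 : |g x| ^ (p - 2) * |g x| ≤ |f x| ^ (p - 2) * |f x| := by
          apply mul_le_mul (Real.rpow_le_rpow hGn h hq) h hGn (Real.rpow_nonneg hFn _)
        have h2 : |f x| ^ (p - 2) * |f x| * |f x| = |f x| ^ p := by
          have := abs_rpow_id_sq hp (|f x|)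
          rwa [abs_abs] at this
        calc |g x| ^ (p - 2) * |g x| * |f x| ≤ |f x| ^ (p - 2) * |f x| * |f x| := by gcongr
          _ = |f x| ^ p := h2
          _ ≤ |f x| ^ p + |g x| ^ p := le_add_of_nonneg_right (Real.rpow_nonneg hGn _)
  calc ∫ x in D, (p * (p - 1) * ∫ s in (0:ℝ)..1, s * |s * g x + (1 - s) * f x| ^ (p - 2)) *
          (f x - g x) ^ 2
      = ∫ x in D, (|f x| ^ p + (p - 1) * |g x| ^ p - p * (|g x| ^ (p - 2) * g x * f x)) := by
        apply MeasureTheory.integral_congr_ae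
        filter_upwards with x
        exact key_identity hp (f x) (g x)
    _ = (∫ x in D, |f x| ^ p) + (p - 1) * (∫ x in D, |g x| ^ p) -
        p * ∫ x in D, |g x| ^ (p - 2) * g x * f x := by
        have hAB : Integrable (fun x => |f x| ^ p + (p - 1) * |g x| ^ p)
            (volume.restrict D) := hA.add (hB.const_mul (p - 1))
        rw [integral_sub hAB (hC.const_mul p),
          integral_add hA (hB.const_mul (p - 1)), MeasureTheory.integral_const_mul, MeasureTheory.integral_const_mul]
end

section
/- For p ≥ 2, the first zero ν₁(p) of the solution φ of (|φ'|^{p-2}φ')' + |φ|^{p-2}φ = 0, φ(0)=1, φ'(0)=0, equals (p-1)^{1/p}·π/(p·sin(π/p)). -/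
open Real

section
open Real Set MeasureTheory intervalIntegral Filter


lemma abs_rpow_hasDerivAt {e : ℝ} (he : 1 < e) (x : ℝ) :
    HasDerivAt (fun y : ℝ => |y| ^ e) (e * |x| ^ (e - 2) * x) x := by
  rcases lt_trichotomy x 0 with hx | rfl | hx
  · have h1 : HasDerivAt (fun y : ℝ => (-y) ^ e) (e * (-x) ^ (e - 1) * (-1)) x := by
      have := (Real.hasDerivAt_rpow_const (x := -x) (p := e) (Or.inl (by linarith))).comp x
        (hasDerivAt_neg x)
      exact this
    have h2 : (fun y : ℝ => |y| ^ e) =ᶠ[nhds x] fun y => (-y) ^ e := by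
      filter_upwards [Iio_mem_nhds hx] with y hy
      rw [abs_of_neg hy]
    refine (h1.congr_of_eventuallyEq h2).congr_deriv ?_
    have hax : |x| = -x := abs_of_neg hx
    have hxpos : (0:ℝ) < -x := by linarith
    rw [hax]
    rw [show e - 1 = (e - 2) + 1 by ring, Real.rpow_add_one (ne_of_gt hxpos)]
    ring
  · -- x = 0
    rw [hasDerivAt_iff_isLittleO]
    simp only [abs_zero, Real.zero_rpow (by positivity : e ≠ 0), sub_zero, mul_zero, zero_mul,
      smul_eq_mul, mul_comm]
    have h1 : Filter.Tendsto (fun y : ℝ => |y| ^ (e - 1)) (nhds 0) (nhds 0) := by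
      have : ContinuousAt (fun y : ℝ => |y| ^ (e - 1)) 0 := by
        exact (Real.continuousAt_rpow_const _ _ (Or.inr (by linarith))).comp
          continuous_abs.continuousAt
      simpa [Real.zero_rpow (by linarith : e - 1 ≠ 0)] using this.tendsto
    have h2 : (fun y : ℝ => |y| ^ (e - 1)) =o[nhds 0] (fun _ => (1:ℝ)) :=
      Asymptotics.isLittleO_one_iff ℝ |>.2 h1
    have h3 : (fun y : ℝ => |y|) =O[nhds (0:ℝ)] (fun y => y) :=
      Asymptotics.isBigO_of_le _ (fun y => by simp)
    have := h2.mul_isBigO h3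
    simp only [one_mul] at this
    refine this.congr' ?_ (by rfl)
    filter_upwards with y
    rcases eq_or_ne y 0 with rfl | hy
    · simp [Real.zero_rpow (by linarith : e - 1 ≠ 0), Real.zero_rpow (by positivity : e ≠ 0)]
    · rw [← Real.rpow_add_one (abs_ne_zero.2 hy)]; ring_nf
  · have h1 : HasDerivAt (fun y : ℝ => y ^ e) (e * x ^ (e - 1)) x :=
      Real.hasDerivAt_rpow_const (Or.inl (ne_of_gt hx))
    have h2 : (fun y : ℝ => |y| ^ e) =ᶠ[nhds x] fun y => y ^ e := by
      filter_upwards [Ioi_mem_nhds hx] with y hy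
      rw [abs_of_pos hy]
    refine (h1.congr_of_eventuallyEq h2).congr_deriv ?_
    rw [abs_of_pos hx, show e - 1 = (e - 2) + 1 by ring, Real.rpow_add_one (ne_of_gt hx)]
    ring


lemma sgnpow_abs {p : ℝ} (hp : 1 < p) {x : ℝ} (hx : x ≠ 0) :
    |(|x| ^ (p-2) * x)| = |x| ^ (p-1) := by
  have hax : (0:ℝ) < |x| := abs_pos.2 hx
  rw [abs_mul, abs_of_pos (Real.rpow_pos_of_pos hax _), show p-1 = p-2+1 by ring,
    Real.rpow_add_one (ne_of_gt hax)]

lemma sgnpow_one {p : ℝ} (hp : 1 < p) (x : ℝ) :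
    |(|x| ^ (p-2) * x)| ^ (p/(p-1) - 2) * (|x| ^ (p-2) * x) = x := by
  rcases eq_or_ne x 0 with rfl | hx
  · simp
  · have hax : (0:ℝ) < |x| := abs_pos.2 hx
    have hp1 : p - 1 ≠ 0 := by linarith
    rw [sgnpow_abs hp hx, ← Real.rpow_mul (le_of_lt hax),
      show (p-1) * (p/(p-1) - 2) = 2 - p by field_simp; ring,
      ← mul_assoc, ← Real.rpow_add hax, show 2-p+(p-2) = 0 by ring, Real.rpow_zero, one_mul]

lemma sgnpow_q {p : ℝ} (hp : 1 < p) (x : ℝ) :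
    |(|x| ^ (p-2) * x)| ^ (p/(p-1)) = |x| ^ p := by
  rcases eq_or_ne x 0 with rfl | hx
  · have hq : p / (p-1) ≠ 0 := div_ne_zero (by linarith) (by linarith)
    simp [Real.zero_rpow hq, Real.zero_rpow (by linarith : p ≠ 0)]
  · have hax : (0:ℝ) < |x| := abs_pos.2 hx
    have hp1 : p - 1 ≠ 0 := by linarith
    rw [sgnpow_abs hp hx, ← Real.rpow_mul (le_of_lt hax),
      show (p-1) * (p/(p-1)) = p by field_simp]


lemma beta_integrable {a : ℝ} (h0 : 0 < a) (h1 : a < 1) :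
    IntervalIntegrable (fun u : ℝ => u ^ (a-1) * (1-u) ^ (-a)) volume 0 1 := by
  have hc := Complex.betaIntegral_convergent (u := (a:ℂ)) (v := ((1-a : ℝ):ℂ))
    (by simpa using h0) (by simpa using by linarith : 0 < Complex.re ((1-a:ℝ):ℂ))
  rw [intervalIntegrable_iff_integrableOn_Ioc_of_le zero_le_one] at hc ⊢
  have heq : EqOn (fun u : ℝ => u ^ (a-1) * (1-u) ^ (-a))
      (fun u : ℝ => ((u:ℂ) ^ ((a:ℂ)-1) * ((1:ℂ)-u) ^ (((1-a:ℝ):ℂ)-1)).re) (Ioc 0 1) := by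
    intro u hu
    have hu0 : (0:ℝ) ≤ u := le_of_lt hu.1
    have hu1 : (0:ℝ) ≤ 1 - u := by linarith [hu.2]
    simp only
    rw [show ((a:ℂ)-1) = ((a-1 : ℝ):ℂ) by push_cast; ring,
      show (((1-a:ℝ):ℂ)-1) = ((-a : ℝ):ℂ) by push_cast; ring,
      show ((1:ℂ) - (u:ℂ)) = ((1 - u : ℝ):ℂ) by push_cast; ring,
      ← Complex.ofReal_cpow hu0, ← Complex.ofReal_cpow hu1]
    simp [← Complex.ofReal_mul]
  have hre : IntegrableOn (fun u:ℝ => ((u:ℂ) ^ ((a:ℂ)-1) * ((1:ℂ)-u) ^ (((1-a:ℝ):ℂ)-1)).re)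
      (Ioc 0 1) volume := by
    have := hc.re
    simpa [RCLike.re_to_complex, IntegrableOn] using this
  exact (hre.congr_fun (fun u hu => (heq hu).symm) measurableSet_Ioc)

lemma beta_value {a : ℝ} (h0 : 0 < a) (h1 : a < 1) :
    ∫ u in (0:ℝ)..1, u ^ (a-1) * (1-u) ^ (-a) = π / Real.sin (π * a) := by
  have hB := Complex.Gamma_mul_Gamma_eq_betaIntegral (s := (a:ℂ)) (t := ((1-a : ℝ):ℂ))
    (by simpa using h0) (by simpa using by linarith : 0 < Complex.re ((1-a:ℝ):ℂ))
  have hsum : (a:ℂ) + ((1-a:ℝ):ℂ) = 1 := by push_cast; ring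
  rw [hsum, Complex.Gamma_one, one_mul] at hB
  have heq : Complex.betaIntegral (a:ℂ) ((1-a:ℝ):ℂ)
      = ((∫ u in (0:ℝ)..1, u ^ (a-1) * (1-u) ^ (-a) : ℝ) : ℂ) := by
    rw [Complex.betaIntegral, ← intervalIntegral.integral_ofReal]
    refine intervalIntegral.integral_congr fun u hu => ?_
    rw [uIcc_of_le zero_le_one] at hu
    have hu0 : (0:ℝ) ≤ u := hu.1
    have hu1 : (0:ℝ) ≤ 1 - u := by linarith [hu.2]
    rw [show ((a:ℂ)-1) = ((a-1 : ℝ):ℂ) by push_cast; ring,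
      show (((1-a:ℝ):ℂ)-1) = ((-a : ℝ):ℂ) by push_cast; ring,
      show ((1:ℂ) - (u:ℂ)) = ((1 - u : ℝ):ℂ) by push_cast; ring,
      ← Complex.ofReal_cpow hu0, ← Complex.ofReal_cpow hu1]
    push_cast
    ring
  rw [heq, Complex.Gamma_ofReal, Complex.Gamma_ofReal, ← Complex.ofReal_mul] at hB
  have := Complex.ofReal_inj.1 (hB.trans rfl)
  rw [Real.Gamma_mul_Gamma_one_sub] at this
  exact this.symm


noncomputable def bfun (a : ℝ) : ℝ → ℝ := fun u => u ^ (a-1) * (1-u) ^ (-a)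

noncomputable def Ffun (p : ℝ) : ℝ → ℝ :=
  fun x => ((p-1) ^ ((1:ℝ)/p) / p) * ∫ u in x ^ p..1, bfun (1/p) u

section
variable {p : ℝ} (hp : 2 ≤ p)

lemma ha_pos (hp : 2 ≤ p) : 0 < 1/p := by positivity
lemma ha_lt (hp : 2 ≤ p) : 1/p < 1 := by
  rw [div_lt_one (by linarith)]; linarith

lemma bint (hp : 2 ≤ p) : IntervalIntegrable (bfun (1/p)) volume 0 1 :=
  beta_integrable (ha_pos hp) (ha_lt hp)

lemma bint' (hp : 2 ≤ p) {s t : ℝ} (hs : s ∈ Icc (0:ℝ) 1) (ht : t ∈ Icc (0:ℝ) 1) :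
    IntervalIntegrable (bfun (1/p)) volume s t :=
  (bint hp).mono_set (by rw [uIcc_of_le zero_le_one]; exact uIcc_subset_Icc hs ht)

lemma bnonneg {u : ℝ} (hu : u ∈ Icc (0:ℝ) 1) : 0 ≤ bfun (1/p) u :=
  mul_nonneg (Real.rpow_nonneg hu.1 _) (Real.rpow_nonneg (by linarith [hu.2]) _)

lemma F_zero (hp : 2 ≤ p) : Ffun p 0 = (p-1) ^ ((1:ℝ)/p) * π / (p * Real.sin (π / p)) := by
  have hp0 : (0:ℝ) < p := by linarith
  simp only [Ffun, bfun]
  rw [Real.zero_rpow (ne_of_gt hp0),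
    beta_value (ha_pos hp) (ha_lt hp), show π * (1/p) = π / p by ring]
  field_simp

lemma F_one (hp : 2 ≤ p) : Ffun p 1 = 0 := by
  rw [Ffun, Real.one_rpow, intervalIntegral.integral_same, mul_zero]

lemma xp_mem (hp : 2 ≤ p) {x : ℝ} (hx : x ∈ Icc (0:ℝ) 1) : x ^ p ∈ Icc (0:ℝ) 1 :=
  ⟨Real.rpow_nonneg hx.1 _, Real.rpow_le_one hx.1 hx.2 (by linarith)⟩

lemma F_cont (hp : 2 ≤ p) : ContinuousOn (Ffun p) (Icc 0 1) := by
  have hint : IntegrableOn (bfun (1/p)) (uIcc 0 1) volume := by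
    rw [uIcc_of_le zero_le_one, integrableOn_Icc_iff_integrableOn_Ioc]
    exact (intervalIntegrable_iff_integrableOn_Ioc_of_le zero_le_one).1 (bint hp)
  have hG : ContinuousOn (fun y => ∫ u in y..1, bfun (1/p) u) (Icc 0 1) := by
    have := continuousOn_primitive_interval_left (a := 0) (b := 1) (μ := volume) hint
    rwa [uIcc_of_le zero_le_one] at this
  have hxp : ContinuousOn (fun x : ℝ => x ^ p) (Icc 0 1) := by
    intro x hx
    exact (Real.continuousAt_rpow_const x p (Or.inr (by linarith))).continuousWithinAt
  unfold Ffun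
  exact continuousOn_const.mul (hG.comp hxp (fun x hx => xp_mem hp hx))

lemma F_deriv (hp : 2 ≤ p) {x : ℝ} (hx : x ∈ Ioo (0:ℝ) 1) :
    HasDerivAt (Ffun p) (-((p-1) ^ ((1:ℝ)/p) * (1 - x ^ p) ^ (-(1:ℝ)/p))) x := by
  have hp0 : (0:ℝ) < p := by linarith
  have hx0 := hx.1
  have hxp1 : x ^ p < 1 := Real.rpow_lt_one (le_of_lt hx0) hx.2 hp0
  have hxp0 : 0 < x ^ p := Real.rpow_pos_of_pos hx0 _
  -- derivative of inner primitive at y = x^p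
  have hGy : HasDerivAt (fun y => ∫ u in y..1, bfun (1/p) u) (-(bfun (1/p) (x ^ p))) (x ^ p) := by
    refine intervalIntegral.integral_hasDerivAt_left
      (bint' hp ⟨hxp0.le, hxp1.le⟩ ⟨zero_le_one, le_refl 1⟩) ?_ ?_
    · have hbc : ∀ y ∈ Ioo (0:ℝ) 1, ContinuousAt (bfun (1/p)) y := by
        intro y hy
        have h1 : ContinuousAt (fun u : ℝ => u ^ ((1:ℝ)/p - 1)) y :=
          Real.continuousAt_rpow_const _ _ (Or.inl (ne_of_gt hy.1))
        have h2 : ContinuousAt (fun u : ℝ => (1-u) ^ (-(1/p) : ℝ)) y := by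
          have := Real.continuousAt_rpow_const (1 - y) (-(1/p)) (Or.inl (by linarith [hy.2]))
          exact this.comp ((continuous_const.sub continuous_id).continuousAt)
        exact h1.mul h2
      exact ContinuousAt.stronglyMeasurableAtFilter isOpen_Ioo hbc _ ⟨hxp0, hxp1⟩
    · have h1 : ContinuousAt (fun u : ℝ => u ^ ((1:ℝ)/p - 1)) (x ^ p) :=
        Real.continuousAt_rpow_const _ _ (Or.inl (ne_of_gt hxp0))
      have h2 : ContinuousAt (fun u : ℝ => (1-u) ^ (-(1/p) : ℝ)) (x ^ p) := by
        have := Real.continuousAt_rpow_const (1 - x ^ p) (-(1/p)) (Or.inl (by linarith))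
        exact this.comp ((continuous_const.sub continuous_id).continuousAt)
      exact h1.mul h2
  have hxd : HasDerivAt (fun x : ℝ => x ^ p) (p * x ^ (p-1)) x :=
    Real.hasDerivAt_rpow_const (Or.inl (ne_of_gt hx0))
  have := (hGy.comp x hxd).const_mul ((p-1) ^ ((1:ℝ)/p) / p)
  have heq : Ffun p = fun x => ((p-1) ^ ((1:ℝ)/p) / p) * ∫ u in x ^ p..1, bfun (1/p) u := rfl
  rw [heq]
  refine this.congr_deriv ?_
  symm
  simp only [bfun]
  have key : (x ^ p) ^ ((1:ℝ)/p - 1) * x ^ (p-1) = 1 := by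
    rw [← Real.rpow_mul hx0.le, ← Real.rpow_add hx0,
      show p * ((1:ℝ)/p - 1) + (p-1) = 0 by field_simp; ring, Real.rpow_zero]
  have expand : (p-1) ^ ((1:ℝ)/p) / p *
      (-((x ^ p) ^ ((1:ℝ)/p - 1) * (1 - x ^ p) ^ (-(1/p):ℝ)) * (p * x ^ (p-1)))
      = -((p-1) ^ ((1:ℝ)/p) * (1 - x ^ p) ^ (-(1/p):ℝ)) *
        ((x ^ p) ^ ((1:ℝ)/p - 1) * x ^ (p-1)) * (p / p) := by ring
  rw [expand, key, div_self (ne_of_gt hp0)]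
  rw [show (-(1:ℝ))/p = -((1:ℝ)/p) by ring]
  ring
end

section

variable {p : ℝ} {φ φ' ψ' : ℝ → ℝ}

lemma energy (hp : 2 ≤ p)
    (hφ : ∀ r, 0 ≤ r → HasDerivAt φ (φ' r) r)
    (hψ : ∀ r, 0 ≤ r → HasDerivAt (fun t => |φ' t| ^ (p - 2) * φ' t) (ψ' r) r)
    (hode : ∀ r, 0 ≤ r → ψ' r + |φ r| ^ (p - 2) * φ r = 0)
    (h0 : φ 0 = 1) (h0' : φ' 0 = 0) :
    ∀ r, 0 ≤ r → (p-1) * |φ' r| ^ p + |φ r| ^ p = 1 := by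
  have hp1 : (1:ℝ) < p := by linarith
  have hp0 : (0:ℝ) < p := by linarith
  have hq1 : 1 < p / (p-1) := by
    rw [lt_div_iff₀ (by linarith)]; linarith
  set E : ℝ → ℝ :=
    fun t => (p-1)/p * |(|φ' t| ^ (p-2) * φ' t)| ^ (p/(p-1)) + (1/p) * |φ t| ^ p with hE
  have hEd : ∀ s, 0 ≤ s → HasDerivAt E 0 s := by
    intro s hs
    have hA : HasDerivAt (fun t => |(|φ' t| ^ (p-2) * φ' t)| ^ (p/(p-1)))
        ((p/(p-1)) * |(|φ' s| ^ (p-2) * φ' s)| ^ (p/(p-1)-2) * (|φ' s| ^ (p-2) * φ' s) * ψ' s)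
        s := by
      have := (abs_rpow_hasDerivAt hq1 (|φ' s| ^ (p-2) * φ' s)).comp s (hψ s hs)
      exact this
    have hB : HasDerivAt (fun t => |φ t| ^ p) (p * |φ s| ^ (p-2) * φ s * φ' s) s := by
      have := (abs_rpow_hasDerivAt hp1 (φ s)).comp s (hφ s hs)
      exact this
    have hsum := (hA.const_mul ((p-1)/p)).add (hB.const_mul (1/p))
    rw [hE]
    refine hsum.congr_deriv ?_
    symm
    have h1 : |(|φ' s| ^ (p-2) * φ' s)| ^ (p/(p-1)-2) * (|φ' s| ^ (p-2) * φ' s) = φ' s :=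
      sgnpow_one hp1 (φ' s)
    have h2 : ψ' s = -(|φ s| ^ (p-2) * φ s) := by
      have := hode s hs; linarith
    rw [h2]
    have hc : (p-1)/p * (p/(p-1)) = 1 := by
      field_simp
      exact div_self (by linarith)
    have hcp : 1/p * p = 1 := by field_simp
    set W := |φ' s| ^ (p-2) * φ' s with hW
    set A' := |W| ^ (p/(p-1)-2) with hA'
    set X := |φ s| ^ (p-2) * φ s with hX
    linear_combination (A' * W * X) * hc + (-(X * φ' s)) * hcp + X * h1
  have hEr : ∀ r, 0 ≤ r → E r = E 0 := by
    intro r hr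
    rcases eq_or_lt_of_le hr with rfl | hr'
    · rfl
    have hcont : ContinuousOn E (Icc 0 r) :=
      fun x hx => ((hEd x hx.1).continuousAt).continuousWithinAt
    exact constant_of_has_deriv_right_zero hcont
      (fun x hx => (hEd x hx.1).hasDerivWithinAt) r ⟨hr, le_refl r⟩
  intro r hr
  have h := hEr r hr
  rw [hE] at h
  have hqne : p / (p-1) ≠ 0 := ne_of_gt (div_pos hp0 (by linarith))
  simp only [h0, h0', abs_zero, abs_one, Real.one_rpow, mul_zero, zero_mul,
    Real.zero_rpow hqne, mul_one, zero_add, add_zero] at h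
  rw [sgnpow_q hp1 (φ' r)] at h
  field_simp at h
  linarith [h]
end

section

variable {p : ℝ} {φ φ' ψ' : ℝ → ℝ}

-- representation of w by FTC
lemma w_repr (hp : 2 ≤ p)
    (hψ : ∀ r, 0 ≤ r → HasDerivAt (fun t => |φ' t| ^ (p - 2) * φ' t) (ψ' r) r)
    (hψ'cont : ContinuousOn ψ' (Set.Ici 0)) (h0' : φ' 0 = 0)
    {r : ℝ} (hr : 0 ≤ r) :
    |φ' r| ^ (p - 2) * φ' r = ∫ t in (0:ℝ)..r, ψ' t := by
  have hint : IntervalIntegrable ψ' volume 0 r :=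
    (hψ'cont.mono (by rw [uIcc_of_le hr]; exact Icc_subset_Ici_self)).intervalIntegrable
  have := intervalIntegral.integral_eq_sub_of_hasDerivAt
    (f := fun t => |φ' t| ^ (p - 2) * φ' t) (f' := ψ')
    (fun t ht => hψ t (by rw [uIcc_of_le hr] at ht; exact ht.1)) hint
  rw [this, h0', abs_zero, mul_zero, sub_zero]

lemma phi'_neg (hp : 2 ≤ p)
    (hψ : ∀ r, 0 ≤ r → HasDerivAt (fun t => |φ' t| ^ (p - 2) * φ' t) (ψ' r) r)
    (hψ'cont : ContinuousOn ψ' (Set.Ici 0))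
    (hode : ∀ r, 0 ≤ r → ψ' r + |φ r| ^ (p - 2) * φ r = 0)
    (h0' : φ' 0 = 0)
    {r : ℝ} (hr : 0 < r) (hpos : ∀ s, 0 ≤ s → s ≤ r → 0 < φ s) :
    φ' r < 0 := by
  have hw := w_repr hp hψ hψ'cont h0' hr.le
  have hneg : (∫ t in (0:ℝ)..r, ψ' t) < 0 := by
    have hint : IntervalIntegrable (fun t => -ψ' t) volume 0 r :=
      ((hψ'cont.mono (by rw [uIcc_of_le hr.le]; exact Icc_subset_Ici_self)).intervalIntegrable).neg
    have hpos' : 0 < ∫ t in (0:ℝ)..r, -ψ' t := by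
      refine intervalIntegral.intervalIntegral_pos_of_pos_on hint ?_ hr
      intro x hx
      have hx0 : (0:ℝ) ≤ x := hx.1.le
      have hφx := hpos x hx0 hx.2.le
      have := hode x hx0
      have h2 : -ψ' x = |φ x| ^ (p-2) * φ x := by linarith
      rw [h2]
      exact mul_pos (Real.rpow_pos_of_pos (abs_pos.2 (ne_of_gt hφx)) _) hφx
    rw [intervalIntegral.integral_neg] at hpos'
    linarith
  rw [← hw] at hneg
  by_contra hc
  push_neg at hc
  have : 0 ≤ |φ' r| ^ (p-2) * φ' r :=
    mul_nonneg (Real.rpow_nonneg (abs_nonneg _) _) hc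
  linarith

-- the main identity
lemma main_identity (hp : 2 ≤ p)
    (hφ : ∀ r, 0 ≤ r → HasDerivAt φ (φ' r) r)
    (hψ : ∀ r, 0 ≤ r → HasDerivAt (fun t => |φ' t| ^ (p - 2) * φ' t) (ψ' r) r)
    (hψ'cont : ContinuousOn ψ' (Set.Ici 0))
    (hode : ∀ r, 0 ≤ r → ψ' r + |φ r| ^ (p - 2) * φ r = 0)
    (h0 : φ 0 = 1) (h0' : φ' 0 = 0)
    {R : ℝ} (hR : 0 < R) (hpos : ∀ s, 0 ≤ s → s < R → 0 < φ s) :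
    Ffun p (φ R) = R := by
  have hp1 : (1:ℝ) < p := by linarith
  have hp0 : (0:ℝ) < p := by linarith
  have hφcont : ContinuousOn φ (Ici 0) :=
    fun x hx => ((hφ x hx).continuousAt).continuousWithinAt
  have hen := energy hp hφ hψ hode h0 h0'
  -- φ R ≥ 0
  have hφR0 : 0 ≤ φ R := by
    have htend : Tendsto φ (nhdsWithin R (Iio R)) (nhds (φ R)) :=
      ((hφ R hR.le).continuousAt).continuousWithinAt
    refine ge_of_tendsto htend ?_
    filter_upwards [Ioo_mem_nhdsLT_of_mem (show R ∈ Ioc 0 R from ⟨hR, le_refl R⟩)] with s hs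
    exact (hpos s hs.1.le hs.2).le
  -- φ ≤ 1 on Ici 0
  have hφle1 : ∀ s, 0 ≤ s → |φ s| ≤ 1 := by
    intro s hs
    by_contra hcon
    push_neg at hcon
    have h1 : 1 < |φ s| ^ p := by
      rw [Real.one_lt_rpow_iff_of_pos (by linarith)]
      exact Or.inl ⟨hcon, hp0⟩
    have h2 := hen s hs
    nlinarith [Real.rpow_nonneg (abs_nonneg (φ' s)) p]
  -- φ maps [0,R] into [0,1]
  have hmaps : ∀ s, s ∈ Icc 0 R → φ s ∈ Icc (0:ℝ) 1 := by
    intro s hs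
    constructor
    · rcases eq_or_lt_of_le hs.2 with rfl | h
      · exact hφR0
      · exact (hpos s hs.1 h).le
    · exact (le_abs_self _).trans (hφle1 s hs.1)
  -- derivative formula for φ' on (0, R)
  have hkey : ∀ t, t ∈ Ioo 0 R → HasDerivAt (fun s => Ffun p (φ s) - s) 0 t := by
    intro t ht
    have ht0 : (0:ℝ) ≤ t := ht.1.le
    have hφt : 0 < φ t := hpos t ht0 ht.2
    have hφ't : φ' t < 0 :=
      phi'_neg hp hψ hψ'cont hode h0' ht.1 (fun s hs hsr => hpos s hs (lt_of_le_of_lt hsr ht.2))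
    have hAbs : |φ' t| ^ p > 0 := Real.rpow_pos_of_pos (abs_pos.2 (ne_of_lt hφ't)) _
    have hent := hen t ht0
    have hφtabs : |φ t| = φ t := abs_of_pos hφt
    rw [hφtabs] at hent
    have hφt1 : φ t < 1 := by
      by_contra hcon
      push_neg at hcon
      have : (1:ℝ) ≤ (φ t) ^ p := Real.one_le_rpow hcon hp0.le
      nlinarith
    set A : ℝ := 1 - (φ t) ^ p with hA
    have hApos : 0 < A := by
      have : (φ t) ^ p < 1 ^ p := Real.rpow_lt_rpow hφt.le hφt1 hp0
      rw [Real.one_rpow] at this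
      simp only [hA]
      linarith
    -- φ' t = -(A/(p-1))^(1/p)
    have habs : |φ' t| ^ p = A / (p-1) := by
      rw [eq_div_iff (by linarith : p - 1 ≠ 0)]
      linarith
    have habs2 : |φ' t| = (A / (p-1)) ^ ((1:ℝ)/p) := by
      rw [← habs, ← Real.rpow_mul (abs_nonneg _), mul_one_div, div_self (ne_of_gt hp0),
        Real.rpow_one]
    have hφ'eq : φ' t = -((A / (p-1)) ^ ((1:ℝ)/p)) := by
      rw [← habs2, abs_of_neg hφ't, neg_neg]
    -- compose
    have hF := F_deriv hp (x := φ t) ⟨hφt, hφt1⟩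
    have hcomp := (hF.comp t (hφ t ht0)).sub (hasDerivAt_id t)
    refine hcomp.congr_deriv ?_
    symm
    rw [hφ'eq, Real.div_rpow hApos.le (by linarith : (0:ℝ) ≤ p - 1)]
    have e1 : (1 - φ t ^ p) ^ (-(1:ℝ)/p) * (A ^ ((1:ℝ)/p)) = 1 := by
      rw [hA, ← Real.rpow_add (by rw [← hA]; exact hApos),
        show -(1:ℝ)/p + 1/p = 0 by ring, Real.rpow_zero]
    have e2 : (p-1) ^ ((1:ℝ)/p) * ((p-1) ^ ((1:ℝ)/p))⁻¹ = 1 := by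
      rw [mul_inv_cancel₀]
      exact ne_of_gt (Real.rpow_pos_of_pos (by linarith) _)
    have expand : -((p-1) ^ ((1:ℝ)/p) * (1 - φ t ^ p) ^ (-(1:ℝ)/p)) *
        -(A ^ ((1:ℝ)/p) / (p-1) ^ ((1:ℝ)/p)) - 1
        = ((1 - φ t ^ p) ^ (-(1:ℝ)/p) * (A ^ ((1:ℝ)/p))) *
          ((p-1) ^ ((1:ℝ)/p) * ((p-1) ^ ((1:ℝ)/p))⁻¹) - 1 := by
      field_simp
    rw [expand, e1, e2]
    norm_num
  -- constancy
  have hHcont : ContinuousOn (fun s => Ffun p (φ s) - s) (Icc 0 R) := by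
    refine ContinuousOn.sub ?_ (continuous_id.continuousOn)
    exact (F_cont hp).comp (hφcont.mono (fun x hx => hx.1)) (fun x hx => hmaps x hx)
  have hconst : ∀ ε, ε ∈ Ioc (0:ℝ) R → Ffun p (φ R) - R = Ffun p (φ ε) - ε := by
    intro ε hε
    exact constant_of_has_deriv_right_zero (hHcont.mono (Icc_subset_Icc hε.1.le (le_refl R)))
      (fun x hx => (hkey x ⟨lt_of_lt_of_le hε.1 hx.1, hx.2⟩).hasDerivWithinAt)
      R ⟨hε.2, le_refl R⟩
  have hH0 : Ffun p (φ 0) - 0 = 0 := by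
    rw [h0, F_one hp, sub_zero]
  have hlim : Tendsto (fun s => Ffun p (φ s) - s) (nhdsWithin 0 (Ioc 0 R))
      (nhds (Ffun p (φ 0) - 0)) :=
    (hHcont.continuousWithinAt ⟨le_refl 0, hR.le⟩).mono_left
      (nhdsWithin_mono 0 Ioc_subset_Icc_self)
  have hlim2 : Tendsto (fun _ : ℝ => Ffun p (φ R) - R) (nhdsWithin 0 (Ioc 0 R))
      (nhds (Ffun p (φ 0) - 0)) := by
    refine hlim.congr' ?_
    filter_upwards [self_mem_nhdsWithin] with ε hε
    exact (hconst ε hε).symm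
  have hne : (nhdsWithin (0:ℝ) (Ioc 0 R)).NeBot := by
    rw [nhdsWithin_Ioc_eq_nhdsGT hR]
    infer_instance
  have := tendsto_nhds_unique hlim2 tendsto_const_nhds
  rw [hH0] at this
  linarith [this]
end

section

variable {p : ℝ}

lemma F_nonneg (hp : 2 ≤ p) {x : ℝ} (hx : x ∈ Icc (0:ℝ) 1) : 0 ≤ Ffun p x := by
  have hC : 0 ≤ (p-1) ^ ((1:ℝ)/p) / p :=
    div_nonneg (Real.rpow_nonneg (by linarith) _) (by linarith)
  refine mul_nonneg hC ?_
  refine intervalIntegral.integral_nonneg (xp_mem hp hx).2 ?_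
  intro u hu
  exact bnonneg (p := p) ⟨le_trans (xp_mem hp hx).1 hu.1, hu.2⟩

lemma F_le (hp : 2 ≤ p) {x : ℝ} (hx : x ∈ Icc (0:ℝ) 1) : Ffun p x ≤ Ffun p 0 := by
  have hp0 : (0:ℝ) < p := by linarith
  have hC : 0 ≤ (p-1) ^ ((1:ℝ)/p) / p :=
    div_nonneg (Real.rpow_nonneg (by linarith) _) (by linarith)
  have hxp := xp_mem hp hx
  have hadj := intervalIntegral.integral_add_adjacent_intervals
    (bint' hp ⟨le_refl 0, zero_le_one⟩ hxp) (bint' hp hxp ⟨zero_le_one, le_refl 1⟩)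
  have h1 : 0 ≤ ∫ u in (0:ℝ)..x ^ p, bfun (1/p) u := by
    refine intervalIntegral.integral_nonneg hxp.1 ?_
    intro u hu
    exact bnonneg (p := p) ⟨hu.1, le_trans hu.2 hxp.2⟩
  unfold Ffun
  rw [Real.zero_rpow (ne_of_gt hp0)]
  refine mul_le_mul_of_nonneg_left ?_ hC
  linarith [hadj]

/-- For `p ≥ 2`, the first zero of the solution `φ` of
`(|φ'|^(p-2) φ')' + |φ|^(p-2) φ = 0`, `φ(0)=1`, `φ'(0)=0`, equals
`(p-1)^(1/p) π / (p sin(π/p))`. -/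
theorem stmt_11 (p : ℝ) (hp : 2 ≤ p) (φ φ' ψ' : ℝ → ℝ)
    (hφ : ∀ r, 0 ≤ r → HasDerivAt φ (φ' r) r)
    (hφ'cont : ContinuousOn φ' (Set.Ici 0))
    (hψ : ∀ r, 0 ≤ r → HasDerivAt (fun t => |φ' t| ^ (p - 2) * φ' t) (ψ' r) r)
    (hψ'cont : ContinuousOn ψ' (Set.Ici 0))
    (hode : ∀ r, 0 ≤ r → ψ' r + |φ r| ^ (p - 2) * φ r = 0)
    (h0 : φ 0 = 1) (h0' : φ' 0 = 0) :
    sInf {r : ℝ | 0 < r ∧ φ r = 0} =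
      (p - 1) ^ (1 / p) * π / (p * Real.sin (π / p)) := by
  have hp0 : (0:ℝ) < p := by linarith
  have hφcont : ContinuousOn φ (Ici 0) :=
    fun x hx => ((hφ x hx).continuousAt).continuousWithinAt
  have hen := energy hp hφ hψ hode h0 h0'
  have hφle1 : ∀ s, 0 ≤ s → φ s ≤ 1 := by
    intro s hs
    have habs : |φ s| ≤ 1 := by
      by_contra hcon
      push_neg at hcon
      have h1 : 1 < |φ s| ^ p := by
        rw [Real.one_lt_rpow_iff_of_pos (by linarith)]
        exact Or.inl ⟨hcon, hp0⟩
      have h2 := hen s hs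
      nlinarith [Real.rpow_nonneg (abs_nonneg (φ' s)) p]
    exact (le_abs_self _).trans habs
  set Z := {r : ℝ | 0 < r ∧ φ r = 0} with hZdef
  -- Z is nonempty
  have hZne : Z.Nonempty := by
    by_contra hcon
    rw [Set.not_nonempty_iff_eq_empty] at hcon
    have hpos : ∀ s, 0 ≤ s → 0 < φ s := by
      intro s hs
      rcases eq_or_lt_of_le hs with rfl | hs'
      · rw [h0]; norm_num
      by_contra hc
      push_neg at hc
      obtain ⟨t, ht, hφt⟩ := intermediate_value_Icc' hs (hφcont.mono
        (fun x hx => hx.1)) ⟨hc, by rw [h0]; norm_num⟩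
      have ht0 : 0 < t := by
        rcases eq_or_lt_of_le ht.1 with rfl | h
        · exfalso; rw [h0] at hφt; norm_num at hφt
        · exact h
      have : t ∈ Z := ⟨ht0, hφt⟩
      rw [hcon] at this
      exact this
    set R : ℝ := Ffun p 0 + 1 with hRdef
    have hR : 0 < R := by
      have := F_nonneg hp (x := 0) ⟨le_refl 0, zero_le_one⟩
      rw [hRdef]; linarith
    have hmain := main_identity hp hφ hψ hψ'cont hode h0 h0' hR (fun s hs _ => hpos s hs)
    have hmem : φ R ∈ Icc (0:ℝ) 1 := ⟨(hpos R hR.le).le, hφle1 R hR.le⟩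
    have := F_le hp hmem
    rw [hmain, hRdef] at this
    linarith
  have hbdd : BddBelow Z := ⟨0, fun r hr => hr.1.le⟩
  have hclos := csInf_mem_closure hZne hbdd
  have hCclosed : IsClosed {r : ℝ | 0 ≤ r ∧ φ r = 0} := by
    have heq : {r : ℝ | 0 ≤ r ∧ φ r = 0} = Ici 0 ∩ φ ⁻¹' {0} := by
      ext r
      simp [Set.mem_setOf_eq, Set.mem_Ici]
    rw [heq]
    exact hφcont.preimage_isClosed_of_isClosed isClosed_Ici isClosed_singleton
  have hsub : closure Z ⊆ {r : ℝ | 0 ≤ r ∧ φ r = 0} :=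
    closure_minimal (fun r hr => ⟨hr.1.le, hr.2⟩) hCclosed
  have hz := hsub hclos
  set z : ℝ := sInf Z with hzdef
  have hzpos : 0 < z := by
    rcases eq_or_lt_of_le hz.1 with h | h
    · exfalso
      have : φ z = 0 := hz.2
      rw [← h, h0] at this
      norm_num at this
    · exact h
  have hposz : ∀ s, 0 ≤ s → s < z → 0 < φ s := by
    intro s hs hsz
    rcases eq_or_lt_of_le hs with rfl | hs'
    · rw [h0]; norm_num
    by_contra hc
    push_neg at hc
    obtain ⟨t, ht, hφt⟩ := intermediate_value_Icc' hs (hφcont.mono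
      (fun x hx => hx.1)) ⟨hc, by rw [h0]; norm_num⟩
    have ht0 : 0 < t := by
      rcases eq_or_lt_of_le ht.1 with rfl | h
      · exfalso; rw [h0] at hφt; norm_num at hφt
      · exact h
    have hmem : t ∈ Z := ⟨ht0, hφt⟩
    have := csInf_le hbdd hmem
    rw [← hzdef] at this
    linarith [ht.2]
  have hmain := main_identity hp hφ hψ hψ'cont hode h0 h0' hzpos hposz
  rw [hz.2, F_zero hp] at hmain
  rw [← hmain]
end
end
end

section
/- Let θ > 1, a > 0, λ > 0, and let h ∈ C¹[0,a] with r^{θ-1}|h'|^{p-2}h' ∈ C¹(0,a) solve (r^{θ-1}|h'|^{p-2}h')' + λ r^{θ-1}|h|^{p-2}h = 0 on (0,a). Then h'(0) = 0. -/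
open Real Set Filter Topology

/-- Let `θ > 1`, `a > 0`, `λ > 0`, and let `h ∈ C¹[0,a]` with
`r^(θ-1)|h'|^(p-2) h' ∈ C¹(0,a)` solve `(r^(θ-1)|h'|^(p-2) h')' + λ r^(θ-1)|h|^(p-2) h = 0`
on `(0,a)`. Then `h'(0) = 0`. -/
theorem stmt_14 (p θ a lam : ℝ) (hp : 2 ≤ p) (hθ : 1 < θ) (ha : 0 < a) (hlam : 0 < lam)
    (h h' g' : ℝ → ℝ)
    (hh : ∀ r ∈ Set.Icc 0 a, HasDerivWithinAt h (h' r) (Set.Icc 0 a) r)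
    (hh'cont : ContinuousOn h' (Set.Icc 0 a))
    (hg : ∀ r ∈ Set.Ioo 0 a,
      HasDerivAt (fun t => t ^ (θ - 1) * (|h' t| ^ (p - 2) * h' t)) (g' r) r)
    (hg'cont : ContinuousOn g' (Set.Ioo 0 a))
    (hode : ∀ r ∈ Set.Ioo 0 a, g' r + lam * r ^ (θ - 1) * (|h r| ^ (p - 2) * h r) = 0) :
    h' 0 = 0 := by
  have hp1 : (0:ℝ) < p - 1 := by linarith
  have hθ1 : (0:ℝ) < θ - 1 := by linarith
  have habs : ∀ x : ℝ, |(|x| ^ (p-2) * x)| = |x| ^ (p-1) := by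
    intro x
    rcases eq_or_ne x 0 with hx | hx
    · simp [hx, Real.zero_rpow hp1.ne']
    · rw [abs_mul, abs_of_nonneg (Real.rpow_nonneg (abs_nonneg x) _)]
      rw [show |x| ^ (p-2) * |x| = |x| ^ (p-2) * |x| ^ (1:ℝ) by rw [Real.rpow_one],
        ← Real.rpow_add (abs_pos.mpr hx)]
      ring_nf
  -- continuity and bounds
  have hhc : ContinuousOn h (Icc 0 a) := fun r hr => (hh r hr).continuousWithinAt
  obtain ⟨C, hC⟩ := isCompact_Icc.exists_bound_of_continuousOn hhc
  obtain ⟨D, hD⟩ := isCompact_Icc.exists_bound_of_continuousOn hh'cont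
  set B := (max C 0) ^ (p-1) with hB
  set E := (max D 0) ^ (p-1) with hE
  have hB0 : 0 ≤ B := Real.rpow_nonneg (le_max_right _ _) _
  have hhb : ∀ t ∈ Icc (0:ℝ) a, |h t| ^ (p-1) ≤ B :=
    fun t ht => Real.rpow_le_rpow (abs_nonneg _) (le_trans (hC t ht) (le_max_left _ _)) hp1.le
  have hh'b : ∀ t ∈ Icc (0:ℝ) a, |h' t| ^ (p-1) ≤ E :=
    fun t ht => Real.rpow_le_rpow (abs_nonneg _) (le_trans (hD t ht) (le_max_left _ _)) hp1.le
  -- bound on g'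
  have hg'b : ∀ t ∈ Ioo (0:ℝ) a, |g' t| ≤ lam * B * t ^ (θ-1) := by
    intro t ht
    have := hode t ht
    have hgt : g' t = -(lam * t ^ (θ-1) * (|h t| ^ (p-2) * h t)) := by linarith
    rw [hgt, abs_neg, abs_mul, abs_mul, habs,
      abs_of_nonneg hlam.le, abs_of_nonneg (Real.rpow_nonneg ht.1.le _)]
    calc lam * t ^ (θ-1) * |h t| ^ (p-1) ≤ lam * t ^ (θ-1) * B := by
          exact mul_le_mul_of_nonneg_left (hhb t (Ioo_subset_Icc_self ht))
            (mul_nonneg hlam.le (Real.rpow_nonneg ht.1.le _))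
      _ = lam * B * t ^ (θ-1) := by ring
  set G : ℝ → ℝ := fun t => t ^ (θ - 1) * (|h' t| ^ (p - 2) * h' t) with hGdef
  -- main pointwise bound
  have key : ∀ r ∈ Ioo 0 a, r ^ (θ-1) * |h' r| ^ (p-1) ≤ lam * B * r ^ θ / θ := by
    intro r hr
    have hGr : |G r| = r ^ (θ-1) * |h' r| ^ (p-1) := by
      rw [hGdef]
      simp only [abs_mul, habs, abs_of_nonneg (Real.rpow_nonneg hr.1.le (θ-1))]
    rw [← hGr]
    have hev : ∀ ε ∈ Ioo (0:ℝ) r, |G r| ≤ ε ^ (θ-1) * E + lam * B * r ^ θ / θ := by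
      intro ε hε
      have hεr : ε ≤ r := hε.2.le
      have hsub : Icc ε r ⊆ Ioo 0 a := fun t ht => ⟨lt_of_lt_of_le hε.1 ht.1, lt_of_le_of_lt ht.2 hr.2⟩
      have hint : IntervalIntegrable g' MeasureTheory.volume ε r := by
        apply ContinuousOn.intervalIntegrable
        rw [uIcc_of_le hεr]
        exact hg'cont.mono hsub
      have hftc : ∫ t in ε..r, g' t = G r - G ε := by
        apply intervalIntegral.integral_eq_sub_of_hasDerivAt
        · intro t ht
          rw [uIcc_of_le hεr] at ht
          exact hg t (hsub ht)
        · exact hint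
      have hintb : IntervalIntegrable (fun t => lam * B * t ^ (θ-1)) MeasureTheory.volume ε r := by
        apply ContinuousOn.intervalIntegrable
        apply ContinuousOn.mul continuousOn_const
        intro t ht
        rw [uIcc_of_le hεr] at ht
        exact (Real.continuousAt_rpow_const t (θ-1) (Or.inl (hsub ht).1.ne')).continuousWithinAt
      have hbnd : |∫ t in ε..r, g' t| ≤ ∫ t in ε..r, lam * B * t ^ (θ-1) := by
        have h1 : |∫ t in ε..r, g' t| ≤ ∫ t in ε..r, |g' t| :=
          intervalIntegral.abs_integral_le_integral_abs hεr
        refine h1.trans ?_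
        apply intervalIntegral.integral_mono_on hεr hint.abs hintb
        intro t ht
        exact hg'b t (hsub ht)
      have hintval : ∫ t in ε..r, lam * B * t ^ (θ-1) = lam * B * ((r ^ θ - ε ^ θ) / θ) := by
        rw [intervalIntegral.integral_const_mul, integral_rpow (Or.inl (by linarith : (-1:ℝ) < θ-1))]
        ring_nf
      have hGε : |G ε| ≤ ε ^ (θ-1) * E := by
        have : |G ε| = ε ^ (θ-1) * |h' ε| ^ (p-1) := by
          rw [hGdef]
          simp only [abs_mul, habs, abs_of_nonneg (Real.rpow_nonneg hε.1.le (θ-1))]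
        rw [this]
        apply mul_le_mul_of_nonneg_left (hh'b ε (Ioo_subset_Icc_self (hsub ⟨le_refl ε, hεr⟩)))
        exact Real.rpow_nonneg hε.1.le _
      have hεθ : 0 ≤ ε ^ θ := Real.rpow_nonneg hε.1.le _
      have : |G r| ≤ |G ε| + |∫ t in ε..r, g' t| := by
        have : G r = G ε + ∫ t in ε..r, g' t := by rw [hftc]; ring
        rw [this]
        exact abs_add_le _ _
      refine this.trans ?_
      have h2 : |∫ t in ε..r, g' t| ≤ lam * B * r ^ θ / θ := by
        refine hbnd.trans ?_
        rw [hintval]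
        rw [mul_div_assoc]
        have h3 : (r ^ θ - ε ^ θ) / θ ≤ r ^ θ / θ := by
          apply div_le_div_of_nonneg_right ?_ (by linarith) <;> linarith
        exact mul_le_mul_of_nonneg_left h3 (mul_nonneg hlam.le hB0)
      linarith [hGε]
    -- take ε → 0+
    have htend : Tendsto (fun ε : ℝ => ε ^ (θ-1) * E + lam * B * r ^ θ / θ) (𝓝[>] 0)
        (𝓝 (lam * B * r ^ θ / θ)) := by
      have h1 : Tendsto (fun ε : ℝ => ε ^ (θ-1)) (𝓝[>] 0) (𝓝 0) := by
        have := (Real.continuousAt_rpow_const 0 (θ-1) (Or.inr hθ1.le)).tendsto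
        rw [Real.zero_rpow hθ1.ne'] at this
        exact this.mono_left nhdsWithin_le_nhds
      have := (h1.mul_const E).add_const (lam * B * r ^ θ / θ)
      simpa using this
    refine ge_of_tendsto htend ?_
    filter_upwards [Ioo_mem_nhdsGT_of_mem (by constructor <;> [rfl; exact hr.1] : (0:ℝ) ∈ Ico 0 r)] with ε hε
    exact hev ε hε
  -- now h'(0): limit along Ioo
  have hne : (𝓝[Ioo 0 a] (0:ℝ)).NeBot := by
    rw [← mem_closure_iff_nhdsWithin_neBot, closure_Ioo ha.ne]
    exact ⟨le_refl 0, ha.le⟩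
  have htend1 : Tendsto (fun r => |h' r| ^ (p-1)) (𝓝[Ioo 0 a] 0) (𝓝 (|h' 0| ^ (p-1))) := by
    have h1 : Tendsto h' (𝓝[Ioo 0 a] 0) (𝓝 (h' 0)) :=
      ((hh'cont 0 ⟨le_refl 0, ha.le⟩).mono Ioo_subset_Icc_self).tendsto
    have h2 : ContinuousAt (fun x : ℝ => |x| ^ (p-1)) (h' 0) := by
      exact (Real.continuousAt_rpow_const _ (p-1) (Or.inr hp1.le)).comp continuous_abs.continuousAt
    exact h2.tendsto.comp h1
  have htend2 : Tendsto (fun r => |h' r| ^ (p-1)) (𝓝[Ioo 0 a] 0) (𝓝 0) := by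
    have hup : Tendsto (fun r : ℝ => lam * B * r / θ) (𝓝[Ioo 0 a] 0) (𝓝 0) := by
      have : Tendsto (fun r : ℝ => lam * B * r / θ) (𝓝 0) (𝓝 (lam * B * 0 / θ)) :=
        ((continuous_const.mul continuous_id).div_const θ).tendsto 0
      simpa using this.mono_left nhdsWithin_le_nhds
    apply squeeze_zero' (f := fun r => |h' r| ^ (p-1)) (g := fun r : ℝ => lam * B * r / θ)
    · filter_upwards with r using Real.rpow_nonneg (abs_nonneg _) _
    · filter_upwards [self_mem_nhdsWithin] with r hr
      have hk := key r hr
      have hrθ : r ^ θ = r ^ (θ-1) * r := by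
        rw [← Real.rpow_add_one hr.1.ne']; ring_nf
      rw [hrθ] at hk
      have hr1 : 0 < r ^ (θ-1) := Real.rpow_pos_of_pos hr.1 _
      calc |h' r| ^ (p-1) = r ^ (θ-1) * |h' r| ^ (p-1) / r ^ (θ-1) := by field_simp
        _ ≤ lam * B * (r ^ (θ-1) * r) / θ / r ^ (θ-1) := by
            gcongr
        _ = lam * B * r / θ := by field_simp
    · exact hup
  have := tendsto_nhds_unique htend1 htend2
  have h0 : |h' 0| = 0 := by
    have := (Real.rpow_eq_zero (abs_nonneg _) hp1.ne').mp this
    exact this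
  exact abs_eq_zero.mp h0
end

section
/- Let p ≥ 2 and θ ≥ 1 and let φ be the solution on [0,∞) of (r^{θ-1}|φ'|^{p-2}φ')' + r^{θ-1}|φ|^{p-2}φ = 0 with φ(0)=1, φ'(0)=0. Then every zero of φ is simple: if φ(z₀)=0 then φ'(z₀) ≠ 0. -/
open Real Filter

/-- Key pointwise identity: `|(|s|^(p-2) s)| ^ (p/(p-1)) = (|s|^(p-2) s) * s` (both are `|s|^p`). -/
lemma aux15_id1 {p : ℝ} (hp : 2 ≤ p) (s : ℝ) :
    |(|s| ^ (p - 2) * s)| ^ (p / (p - 1)) = (|s| ^ (p - 2) * s) * s := by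
  have hp1 : (0:ℝ) < p - 1 := by linarith
  rcases eq_or_ne s 0 with rfl | hs
  · simp [Real.zero_rpow (by positivity : p / (p - 1) ≠ 0)]
  · have hs0 : (0:ℝ) < |s| := abs_pos.mpr hs
    have habs : |(|s| ^ (p - 2) * s)| = |s| ^ (p - 1) := by
      rw [abs_mul, abs_of_nonneg (Real.rpow_nonneg (abs_nonneg s) _),
        ← Real.rpow_add_one hs0.ne', show p - 2 + 1 = p - 1 from by ring]
    rw [habs, ← Real.rpow_mul (abs_nonneg s)]
    have he : (p - 1) * (p / (p - 1)) = p := by field_simp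
    rw [he]
    have h2 : |s| ^ (p - 2) * s * s = |s| ^ p := by
      have hss : s * s = |s| * |s| := (abs_mul_abs_self s).symm
      rw [mul_assoc, hss, ← mul_assoc, ← Real.rpow_add_one hs0.ne',
        ← Real.rpow_add_one hs0.ne', show p - 2 + 1 + 1 = p from by ring]
    exact h2.symm

/-- Key pointwise identity: `|(|s|^(p-2) s)| ^ (p/(p-1) - 2) * (|s|^(p-2) s) = s`. -/
lemma aux15_id2 {p : ℝ} (hp : 2 ≤ p) (s : ℝ) :
    |(|s| ^ (p - 2) * s)| ^ (p / (p - 1) - 2) * (|s| ^ (p - 2) * s) = s := by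
  have hp1 : (0:ℝ) < p - 1 := by linarith
  rcases eq_or_ne s 0 with rfl | hs
  · simp
  · have hs0 : (0:ℝ) < |s| := abs_pos.mpr hs
    have habs : |(|s| ^ (p - 2) * s)| = |s| ^ (p - 1) := by
      rw [abs_mul, abs_of_nonneg (Real.rpow_nonneg (abs_nonneg s) _),
        ← Real.rpow_add_one hs0.ne', show p - 2 + 1 = p - 1 from by ring]
    rw [habs, ← Real.rpow_mul (abs_nonneg s), ← mul_assoc, ← Real.rpow_add hs0]
    have he : (p - 1) * (p / (p - 1) - 2) + (p - 2) = 0 := by field_simp; ring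
    rw [he, Real.rpow_zero, one_mul]

/-- Every zero of the solution `φ` of `(r^(θ-1)|φ'|^(p-2) φ')' + r^(θ-1)|φ|^(p-2) φ = 0`,
`φ(0)=1`, `φ'(0)=0`, is simple. -/
theorem stmt_15 (p θ : ℝ) (hp : 2 ≤ p) (hθ : 1 ≤ θ) (φ φ' g' : ℝ → ℝ)
    (hφ : ∀ r, 0 ≤ r → HasDerivAt φ (φ' r) r)
    (hφ'cont : ContinuousOn φ' (Set.Ici 0))
    (hg : ∀ r, 0 ≤ r →
      HasDerivAt (fun t => t ^ (θ - 1) * (|φ' t| ^ (p - 2) * φ' t)) (g' r) r)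
    (hg'cont : ContinuousOn g' (Set.Ici 0))
    (hode : ∀ r, 0 ≤ r → g' r + r ^ (θ - 1) * (|φ r| ^ (p - 2) * φ r) = 0)
    (h0 : φ 0 = 1) (h0' : φ' 0 = 0) :
    ∀ z₀, 0 ≤ z₀ → φ z₀ = 0 → φ' z₀ ≠ 0 := by
  intro z₀ hz₀ hzφ
  by_contra h'
  have hp1 : (1:ℝ) < p := by linarith
  have hpm : (0:ℝ) < p - 1 := by linarith
  have hppos : (0:ℝ) < p := by linarith
  set q : ℝ := p / (p - 1) with hqdef
  have hq1 : 1 < q := (one_lt_div hpm).mpr (by linarith)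
  set K : ℝ := p * (θ - 1) / (p - 1) with hKdef
  have hK0 : 0 ≤ K := div_nonneg (mul_nonneg hppos.le (by linarith)) hpm.le
  set ψ : ℝ → ℝ := fun t => |φ' t| ^ (p - 2) * φ' t with hψdef
  set W : ℝ → ℝ := fun t => (p - 1) / p * |ψ t| ^ q + 1 / p * |φ t| ^ p with hWdef
  set V : ℝ → ℝ := fun t => t ^ K * W t with hVdef
  have hz₀pos : 0 < z₀ := by
    rcases hz₀.lt_or_eq with h | h
    · exact h
    · exfalso; rw [← h, h0] at hzφ; norm_num at hzφ
  -- derivative of ψ at r > 0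
  have hψ' : ∀ r, 0 < r → HasDerivAt ψ ((1 - θ) / r * ψ r - |φ r| ^ (p - 2) * φ r) r := by
    intro r hr
    have hd : HasDerivAt (fun t : ℝ => t ^ (1 - θ) * (t ^ (θ - 1) * ψ t))
        ((1 - θ) * r ^ (1 - θ - 1) * (r ^ (θ - 1) * ψ r) + r ^ (1 - θ) * g' r) r :=
      (Real.hasDerivAt_rpow_const (Or.inl hr.ne')).mul (hg r hr.le)
    have heq : ψ =ᶠ[nhds r] fun t => t ^ (1 - θ) * (t ^ (θ - 1) * ψ t) := by
      filter_upwards [eventually_gt_nhds hr] with t ht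
      rw [← mul_assoc, ← Real.rpow_add ht]
      norm_num
    have h2 := hd.congr_of_eventuallyEq heq
    refine h2.congr_deriv ?_
    have hg'r : g' r = -(r ^ (θ - 1) * (|φ r| ^ (p - 2) * φ r)) := by
      have := hode r hr.le; linarith
    have e0 : r ^ (1 - θ - 1) * r ^ (θ - 1) = r⁻¹ := by
      rw [← Real.rpow_add hr]
      have : 1 - θ - 1 + (θ - 1) = -1 := by ring
      rw [this, Real.rpow_neg_one]
    have e2 : r ^ (1 - θ) * r ^ (θ - 1) = 1 := by
      rw [← Real.rpow_add hr]; norm_num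
    have expand : (1 - θ) * r ^ (1 - θ - 1) * (r ^ (θ - 1) * ψ r) +
        r ^ (1 - θ) * -(r ^ (θ - 1) * (|φ r| ^ (p - 2) * φ r))
        = (1 - θ) * (r ^ (1 - θ - 1) * r ^ (θ - 1)) * ψ r
          - r ^ (1 - θ) * r ^ (θ - 1) * (|φ r| ^ (p - 2) * φ r) := by ring
    rw [hg'r, expand, e0, e2, one_mul]
    ring
  -- derivative of W at r > 0
  have hW' : ∀ r, 0 < r → HasDerivAt W ((1 - θ) / r * |ψ r| ^ q) r := by
    intro r hr
    have h1 : HasDerivAt (fun t => |ψ t| ^ q)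
        (q * |ψ r| ^ (q - 2) * ψ r * ((1 - θ) / r * ψ r - |φ r| ^ (p - 2) * φ r)) r := by
      have := (hasDerivAt_abs_rpow (ψ r) hq1).comp r (hψ' r hr)
      simpa [Function.comp_def] using this
    have h2 : HasDerivAt (fun t => |φ t| ^ p) (p * |φ r| ^ (p - 2) * φ r * φ' r) r := by
      have := (hasDerivAt_abs_rpow (φ r) hp1).comp r (hφ r hr.le)
      simpa [Function.comp_def] using this
    have hsum := (h1.const_mul ((p - 1) / p)).add (h2.const_mul (1 / p))
    refine hsum.congr_deriv ?_
    have e3 : q * |ψ r| ^ (q - 2) * ψ r = q * φ' r := by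
      rw [mul_assoc]
      congr 1
      simp only [hψdef]
      exact aux15_id2 hp (φ' r)
    have e4 : |ψ r| ^ q = ψ r * φ' r := by
      simp only [hψdef, hqdef]
      exact aux15_id1 hp (φ' r)
    rw [e4, e3, hqdef]
    have hrne : r ≠ 0 := hr.ne'
    field_simp
    ring
  -- derivative of V at r > 0
  have hV' : ∀ r, 0 < r → HasDerivAt V (r ^ (K - 1) * (K / p * |φ r| ^ p)) r := by
    intro r hr
    have hd := (Real.hasDerivAt_rpow_const (x := r) (p := K) (Or.inl hr.ne')).mul (hW' r hr)
    refine hd.congr_deriv ?_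
    have e5 : r ^ K = r ^ (K - 1) * r := by
      rw [← Real.rpow_add_one hr.ne']; norm_num
    have e4 : |ψ r| ^ q = ψ r * φ' r := by
      simp only [hψdef, hqdef]
      exact aux15_id1 hp (φ' r)
    have hWr : W r = (p - 1) / p * (ψ r * φ' r) + 1 / p * |φ r| ^ p := by
      simp only [hWdef]
      rw [e4]
    rw [e5, hWr, e4, hKdef]
    have hrne : r ≠ 0 := hr.ne'
    field_simp
    ring
  -- φ vanishes on (0, z₀]
  have key : ∀ a, 0 < a → a ≤ z₀ → φ a = 0 := by
    intro a ha haz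
    have mono : MonotoneOn V (Set.Icc a z₀) := by
      apply monotoneOn_of_deriv_nonneg (convex_Icc a z₀)
      · intro r hrr
        exact ((hV' r (lt_of_lt_of_le ha hrr.1)).continuousAt).continuousWithinAt
      · intro r hrr
        rw [interior_Icc] at hrr
        exact ((hV' r (ha.trans hrr.1)).differentiableAt).differentiableWithinAt
      · intro r hrr
        rw [interior_Icc] at hrr
        have hrpos : 0 < r := ha.trans hrr.1
        rw [(hV' r hrpos).deriv]
        have n1 : (0:ℝ) ≤ r ^ (K - 1) := Real.rpow_nonneg hrpos.le _
        have n2 : (0:ℝ) ≤ K / p := div_nonneg hK0 hppos.le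
        have n3 : (0:ℝ) ≤ |φ r| ^ p := Real.rpow_nonneg (abs_nonneg _) _
        exact mul_nonneg n1 (mul_nonneg n2 n3)
    have hVle : V a ≤ V z₀ := mono ⟨le_rfl, haz⟩ ⟨haz, le_rfl⟩ haz
    have hWz : W z₀ = 0 := by
      simp [hWdef, hψdef, h', hzφ, Real.zero_rpow (by positivity : q ≠ 0),
        Real.zero_rpow (by positivity : p ≠ 0)]
    have hVz : V z₀ = 0 := by simp [hVdef, hWz]
    have hWa0 : 0 ≤ W a := by
      have n1 : (0:ℝ) ≤ |ψ a| ^ q := Real.rpow_nonneg (abs_nonneg _) _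
      have n2 : (0:ℝ) ≤ |φ a| ^ p := Real.rpow_nonneg (abs_nonneg _) _
      simp only [hWdef]
      have : (0:ℝ) ≤ (p - 1) / p := div_nonneg hpm.le hppos.le
      positivity
    have hVa0 : 0 ≤ V a := mul_nonneg (Real.rpow_nonneg ha.le _) hWa0
    have hVa : V a = 0 := le_antisymm (hVle.trans hVz.le) hVa0
    have hak : (0:ℝ) < a ^ K := Real.rpow_pos_of_pos ha K
    have hWa : W a = 0 := by
      rcases mul_eq_zero.mp hVa with h | h
      · exact absurd h hak.ne'
      · exact h
    have n1 : (0:ℝ) ≤ (p - 1) / p * |ψ a| ^ q :=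
      mul_nonneg (div_nonneg hpm.le hppos.le) (Real.rpow_nonneg (abs_nonneg _) _)
    have n2 : (0:ℝ) ≤ 1 / p * |φ a| ^ p :=
      mul_nonneg (by positivity) (Real.rpow_nonneg (abs_nonneg _) _)
    have hWaeq : (p - 1) / p * |ψ a| ^ q + 1 / p * |φ a| ^ p = 0 := hWa
    have hzero : 1 / p * |φ a| ^ p = 0 := by linarith
    have hpow : |φ a| ^ p = 0 := by
      have h1p : (1:ℝ) / p ≠ 0 := by positivity
      rcases mul_eq_zero.mp hzero with h | h
      · exact absurd h h1p
      · exact h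
    have := (Real.rpow_eq_zero_iff_of_nonneg (abs_nonneg _)).mp hpow
    exact abs_eq_zero.mp this.1
  -- continuity of φ at 0 gives a contradiction
  have hc1 : Filter.Tendsto φ (nhdsWithin 0 (Set.Ioi 0)) (nhds 1) := by
    have := ((hφ 0 le_rfl).continuousAt).continuousWithinAt (s := Set.Ioi 0)
    rw [ContinuousWithinAt, h0] at this
    exact this
  have hc0 : Filter.Tendsto φ (nhdsWithin 0 (Set.Ioi 0)) (nhds 0) := by
    apply Filter.Tendsto.congr' _ tendsto_const_nhds
    have hmem : Set.Ioo (0:ℝ) z₀ ∈ nhdsWithin 0 (Set.Ioi 0) :=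
      Ioo_mem_nhdsGT_of_mem ⟨le_rfl, hz₀pos⟩
    filter_upwards [hmem] with t ht
    exact (key t ht.1 ht.2.le).symm
  have := tendsto_nhds_unique hc0 hc1
  norm_num at this
end

section
/- Let p ≥ 2, θ ≥ 1, and φ as in problem (P). The function φ is oscillatory: for every r > 0 there exists t > r with φ(t) = 0. -/
open Real Set

private lemma myAntitoneOn {f f' : ℝ → ℝ} {s : Set ℝ} (hs : Convex ℝ s)
    (hf : ∀ x ∈ s, HasDerivAt f (f' x) x) (h0 : ∀ x ∈ s, f' x ≤ 0) : AntitoneOn f s :=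
  antitoneOn_of_hasDerivWithinAt_nonpos hs
    (fun x hx => (hf x hx).continuousAt.continuousWithinAt)
    (fun x hx => ((hf x (interior_subset hx)).hasDerivWithinAt))
    (fun x hx => h0 x (interior_subset hx))

private lemma psi_sign (p x : ℝ) : 0 ≤ x * (|x| ^ (p-2) * x) := by
  have h : x * (|x|^(p-2) * x) = |x|^(p-2) * (x*x) := by ring
  rw [h]
  exact mul_nonneg (rpow_nonneg (abs_nonneg x) _) (mul_self_nonneg x)

private lemma core (p θ : ℝ) (hp : 2 ≤ p) (hθ : 1 ≤ θ) (ψ ψ' G' : ℝ → ℝ) (r0 : ℝ)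
    (hr0 : 1 ≤ r0)
    (hψ : ∀ r, r0 ≤ r → HasDerivAt ψ (ψ' r) r)
    (hG : ∀ r, r0 ≤ r → HasDerivAt (fun t => t ^ (θ - 1) * (|ψ' t| ^ (p - 2) * ψ' t)) (G' r) r)
    (hode : ∀ r, r0 ≤ r → G' r + r ^ (θ - 1) * (|ψ r| ^ (p - 2) * ψ r) = 0)
    (hpos : ∀ r, r0 ≤ r → 0 < ψ r) : False := by
  have hp1 : (0:ℝ) < p - 1 := by linarith
  have hθ0 : (0:ℝ) < θ := by linarith
  have hθ1 : (0:ℝ) ≤ θ - 1 := by linarith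
  set a : ℝ := (θ-1)/(p-1) with ha
  have ha0 : 0 ≤ a := div_nonneg hθ1 hp1.le
  set q : ℝ := p/(p-1) with hq
  set g : ℝ → ℝ := fun t => t ^ (θ - 1) * (|ψ' t| ^ (p - 2) * ψ' t) with hgdef
  set w : ℝ → ℝ := fun t => g t / ψ t ^ (p-1) with hwdef
  set W' : ℝ → ℝ := fun r =>
    (G' r * ψ r ^ (p-1) - g r * (ψ' r * (p-1) * ψ r ^ (p-1-1))) / (ψ r ^ (p-1))^2 with hW'def
  clear_value a q
  clear_value g w W'
  have hrpos : ∀ r, r0 ≤ r → (0:ℝ) < r := fun r hr => lt_of_lt_of_le one_pos (le_trans hr0 hr)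
  have hw : ∀ r, r0 ≤ r → HasDerivAt w (W' r) r := by
    intro r hr
    have hGr := hG r hr
    simp only [hwdef, hW'def]
    exact hGr.div ((hψ r hr).rpow_const (Or.inl (ne_of_gt (hpos r hr))))
      (ne_of_gt (rpow_pos_of_pos (hpos r hr) _))
  -- key identity
  have hkey : ∀ r, r0 ≤ r → W' r = -(r^(θ-1)) - (p-1) * (w r * ψ' r / ψ r) := by
    intro r hr
    have hψr := hpos r hr
    have hψne : ψ r ≠ 0 := ne_of_gt hψr
    have hAne : ψ r ^ (p-1) ≠ 0 := ne_of_gt (rpow_pos_of_pos hψr _)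
    have habs : |ψ r| = ψ r := abs_of_pos hψr
    have hpow : ψ r ^ (p-2) * ψ r = ψ r ^ (p-1) := by
      rw [← Real.rpow_add_one hψne, show p-2+1 = p-1 by ring]
    have hG'r : G' r = -(r^(θ-1) * ψ r ^ (p-1)) := by
      have h := hode r hr
      rw [habs] at h
      rw [← hpow]; linarith [h]
    have hpp : ψ r ^ (p-1-1) = ψ r ^ (p-1) / ψ r := by
      rw [eq_div_iff hψne, ← Real.rpow_add_one hψne, show p-1-1+1 = p-1 by ring]
    simp only [hW'def, hwdef]
    rw [hG'r, hpp]
    field_simp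
  -- I1 : the derivative of w is at most -(r^(θ-1))
  have hI1 : ∀ r, r0 ≤ r → W' r ≤ -(r^(θ-1)) := by
    intro r hr
    rw [hkey r hr]
    have e : w r * ψ' r / ψ r
        = r^(θ-1) * (ψ' r * (|ψ' r|^(p-2) * ψ' r)) / (ψ r^(p-1) * ψ r) := by
      simp only [hwdef, hgdef]; ring
    have h1 : 0 ≤ w r * ψ' r / ψ r := by
      rw [e]
      apply div_nonneg
      · exact mul_nonneg (rpow_nonneg (hrpos r hr).le _) (psi_sign p (ψ' r))
      · exact mul_nonneg (rpow_nonneg (hpos r hr).le _) (hpos r hr).le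
    nlinarith [h1]
  have hWneg : ∀ r, r0 ≤ r → W' r ≤ 0 := by
    intro r hr
    have := hI1 r hr
    have h2 : (0:ℝ) ≤ r^(θ-1) := rpow_nonneg (hrpos r hr).le _
    linarith
  have hwanti : AntitoneOn w (Ici r0) :=
    myAntitoneOn (convex_Ici r0) (fun x hx => hw x hx) (fun x hx => hWneg x hx)
  set K : ℝ := w r0 + r0^θ/θ with hK
  clear_value K
  have hFanti : AntitoneOn (fun r => w r + r^θ/θ) (Ici r0) := by
    apply myAntitoneOn (convex_Ici r0) (f' := fun x => W' x + x^(θ-1))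
    · intro x hx
      have hx0 : (0:ℝ) < x := hrpos x hx
      have hd : HasDerivAt (fun r:ℝ => r^θ/θ) (x^(θ-1)) x := by
        have h := (Real.hasDerivAt_rpow_const (x := x) (p := θ) (Or.inl (ne_of_gt hx0))).div_const θ
        rw [mul_div_cancel_left₀ _ hθ0.ne'] at h
        exact h
      exact (hw x hx).add hd
    · intro x hx
      have h1 := hI1 x hx
      linarith
  set R : ℝ := max r0 (θ * (2^(θ-1) + |K| + 1)) with hR
  clear_value R
  have hRr0 : r0 ≤ R := by rw [hR]; exact le_max_left _ _
  have hR1 : (1:ℝ) ≤ R := le_trans hr0 hRr0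
  have hRpos : (0:ℝ) < R := lt_of_lt_of_le one_pos hR1
  have hwR : w R + R^θ/θ ≤ K := by
    rw [hK]
    exact hFanti (mem_Ici.2 (le_refl r0)) (mem_Ici.2 hRr0) hRr0
  have hRθ : R^(θ-1) * R = R^θ := by
    rw [← Real.rpow_add_one (ne_of_gt hRpos), show θ-1+1 = θ by ring]
  have hR1pow : (1:ℝ) ≤ R^(θ-1) := by
    have h := Real.rpow_le_rpow zero_le_one hR1 hθ1
    rwa [Real.one_rpow] at h
  have hclaim1 : (R+1)^(θ-1) ≤ 2^(θ-1) * R^(θ-1) := by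
    rw [← Real.mul_rpow (by norm_num) hRpos.le]
    exact Real.rpow_le_rpow (by linarith) (by linarith) hθ1
  have hRdiv : θ * (2^(θ-1) + |K| + 1) ≤ R := by rw [hR]; exact le_max_right _ _
  have hKabs : K ≤ |K| := le_abs_self K
  have h2pos : (0:ℝ) < 2^(θ-1) := rpow_pos_of_pos (by norm_num) _
  have hclaim2 : K + (R+1)^(θ-1) ≤ R^θ/θ := by
    have h1 : R^(θ-1) * (R/θ) = R^θ/θ := by
      rw [← mul_div_assoc, hRθ]
    have h2 : 2^(θ-1) + |K| + 1 ≤ R/θ := by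
      rw [le_div_iff₀ hθ0]
      linarith [hRdiv]
    have h3 := mul_le_mul_of_nonneg_left h2 (by linarith : (0:ℝ) ≤ R^(θ-1))
    have hexp : R^(θ-1)*(2^(θ-1)+|K|+1) = R^(θ-1)*2^(θ-1) + R^(θ-1)*|K| + R^(θ-1) := by ring
    have h4 : R^(θ-1)*2^(θ-1) + R^(θ-1)*|K| + R^(θ-1) ≤ R^θ/θ := by
      rw [← hexp]
      calc R^(θ-1)*(2^(θ-1)+|K|+1) ≤ R^(θ-1)*(R/θ) := h3
        _ = R^θ/θ := h1
    have h5 : |K| ≤ R^(θ-1) * |K| := le_mul_of_one_le_left (abs_nonneg K) hR1pow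
    linarith [h4, hclaim1, hKabs, h5, hR1pow]
  have hwRneg : w R ≤ -((R+1)^(θ-1)) := by linarith
  have hR1pos : (0:ℝ) < (R+1)^(θ-1) := rpow_pos_of_pos (by linarith) _
  have hwneg : ∀ r, r ∈ Icc R (R+1) → w r < 0 := by
    intro r hrI
    have h1 : w r ≤ w R :=
      hwanti (mem_Ici.2 hRr0) (mem_Ici.2 (le_trans hRr0 hrI.1)) hrI.1
    linarith
  -- I2 : Riccati-type inequality on [R, R+1]
  have hI2 : ∀ r, r ∈ Icc R (R+1) → W' r ≤ -((p-1) * (-w r)^q / r^a) := by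
    intro r hrI
    have hr : r0 ≤ r := le_trans hRr0 hrI.1
    have hr0' : 0 < r := hrpos r hr
    have hψr := hpos r hr
    have hwn := hwneg r hrI
    have hmw : 0 < -w r := by linarith
    have hΨ : |ψ' r|^(p-2) * ψ' r < 0 := by
      by_contra hc
      push_neg at hc
      have h1 : 0 ≤ w r := by
        simp only [hwdef, hgdef]
        exact div_nonneg (mul_nonneg (rpow_nonneg hr0'.le _) hc)
          (rpow_nonneg hψr.le _)
      linarith
    have hψ'neg : ψ' r < 0 := by
      by_contra hc
      push_neg at hc
      have := mul_nonneg (rpow_nonneg (abs_nonneg (ψ' r)) (p-2)) hc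
      linarith
    have hψ'p : 0 < -ψ' r := by linarith
    have habs' : |ψ' r| = -ψ' r := abs_of_neg hψ'neg
    have habsne : |ψ' r| ≠ 0 := by rw [habs']; exact ne_of_gt hψ'p
    have hArel : w r * ψ r^(p-1) = r^(θ-1) * (|ψ' r|^(p-2) * ψ' r) := by
      simp only [hwdef, hgdef]
      exact div_mul_cancel₀ _ (ne_of_gt (rpow_pos_of_pos hψr _))
    have h1 : (-ψ' r)^(p-1) = -( |ψ' r|^(p-2) * ψ' r ) := by
      have hstep : |ψ' r|^(p-2) * |ψ' r| = |ψ' r|^(p-1) := by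
        rw [← Real.rpow_add_one habsne, show p-2+1 = p-1 by ring]
      rw [← habs', ← hstep, habs']
      ring
    have hΨeq : (-ψ' r)^(p-1) = (-w r) * ψ r^(p-1) / r^(θ-1) := by
      rw [h1, eq_div_iff (ne_of_gt (rpow_pos_of_pos hr0' (θ-1)))]
      linear_combination hArel
    have h2 : ((-ψ' r)^(p-1))^((p-1)⁻¹) = -ψ' r := by
      rw [← Real.rpow_mul hψ'p.le, mul_inv_cancel₀ (ne_of_gt hp1), Real.rpow_one]
    have e1 : ((ψ r)^(p-1))^((p-1)⁻¹) = ψ r := by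
      rw [← Real.rpow_mul hψr.le, mul_inv_cancel₀ (ne_of_gt hp1), Real.rpow_one]
    have e2 : ((r:ℝ)^(θ-1))^((p-1)⁻¹) = r^a := by
      rw [← Real.rpow_mul hr0'.le, ha, div_eq_mul_inv]
    have hroot : -ψ' r = (-w r)^((p-1)⁻¹) * ψ r / r^a :=
      calc -ψ' r = ((-ψ' r)^(p-1))^((p-1)⁻¹) := h2.symm
        _ = ((-w r) * ψ r^(p-1) / r^(θ-1))^((p-1)⁻¹) := by rw [hΨeq]
        _ = ((-w r)^((p-1)⁻¹) * ((ψ r)^(p-1))^((p-1)⁻¹)) / ((r:ℝ)^(θ-1))^((p-1)⁻¹) := by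
            rw [Real.div_rpow (by positivity) (rpow_nonneg hr0'.le _),
              Real.mul_rpow hmw.le (rpow_nonneg hψr.le _)]
        _ = (-w r)^((p-1)⁻¹) * ψ r / r^a := by rw [e1, e2]
    have hq1 : (-w r) * (-w r)^((p-1)⁻¹) = (-w r)^q := by
      have hqe : (1:ℝ) + (p-1)⁻¹ = q := by
        rw [hq]; field_simp; ring
      rw [← hqe, Real.rpow_add hmw, Real.rpow_one]
    have hterm : (p-1) * (w r * ψ' r / ψ r) = (p-1) * (-w r)^q / r^a := by
      have e : w r * ψ' r = (-w r) * (-ψ' r) := by ring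
      calc (p-1) * (w r * ψ' r / ψ r)
          = (p-1) * ((-w r) * ((-w r)^((p-1)⁻¹) * ψ r / r^a) / ψ r) := by rw [e, hroot]
        _ = (p-1) * (((-w r) * (-w r)^((p-1)⁻¹)) * (ψ r / ψ r) / r^a) := by ring
        _ = (p-1) * ((-w r)^q / r^a) := by rw [hq1, div_self (ne_of_gt hψr), mul_one]
        _ = (p-1) * (-w r)^q / r^a := by ring
    rw [hkey r hr, hterm]
    have h3 : (0:ℝ) ≤ r^(θ-1) := rpow_nonneg hr0'.le _
    linarith
  -- blow-up of z = (-w)^(-1/(p-1)) on [R, R+1]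
  set c : ℝ := ((R+1)^a)⁻¹ with hc
  clear_value c
  have hcpos : 0 < c := by
    rw [hc]; exact inv_pos.2 (rpow_pos_of_pos (by linarith) _)
  set z : ℝ → ℝ := fun r => (-w r) ^ (-(p-1)⁻¹) with hzdef
  set Z' : ℝ → ℝ := fun r => (-W' r) * (-(p-1)⁻¹) * (-w r)^(-(p-1)⁻¹ - 1) with hZ'def
  clear_value z Z'
  have hzD : ∀ x ∈ Icc R (R+1), HasDerivAt z (Z' x) x := by
    intro x hx
    have hr : r0 ≤ x := le_trans hRr0 hx.1
    simp only [hzdef, hZ'def]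
    exact ((hw x hr).neg).rpow_const
      (Or.inl (ne_of_gt (by linarith [hwneg x hx] : (0:ℝ) < -w x)))
  have hZ'le : ∀ x ∈ Icc R (R+1), Z' x + c ≤ 0 := by
    intro x hx
    have hr : r0 ≤ x := le_trans hRr0 hx.1
    have hx0 : 0 < x := hrpos x hr
    have hmw : 0 < -w x := by linarith [hwneg x hx]
    have hE : 0 < (-w x)^(-(p-1)⁻¹ - 1) := rpow_pos_of_pos hmw _
    have hra : 0 < x^a := rpow_pos_of_pos hx0 _
    have h1 : Z' x = W' x * ((p-1)⁻¹ * (-w x)^(-(p-1)⁻¹ - 1)) := by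
      simp only [hZ'def]; ring
    have h2 := hI2 x hx
    have h3 : Z' x ≤ -((p-1) * (-w x)^q / x^a) * ((p-1)⁻¹ * (-w x)^(-(p-1)⁻¹-1)) := by
      rw [h1]
      exact mul_le_mul_of_nonneg_right h2 (by positivity)
    have h4 : (-w x)^q * (-w x)^(-(p-1)⁻¹-1) = 1 := by
      rw [← Real.rpow_add hmw, show q + (-(p-1)⁻¹ - 1) = 0 by rw [hq]; field_simp; ring, Real.rpow_zero]
    have h5 : -((p-1)*(-w x)^q/x^a) * ((p-1)⁻¹ * (-w x)^(-(p-1)⁻¹-1)) = -(x^a)⁻¹ := by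
      calc -((p-1)*(-w x)^q/x^a) * ((p-1)⁻¹ * (-w x)^(-(p-1)⁻¹-1))
          = -(((p-1) * (p-1)⁻¹) * ((-w x)^q * (-w x)^(-(p-1)⁻¹-1)) / x^a) := by ring
        _ = -(x^a)⁻¹ := by
            rw [h4, mul_inv_cancel₀ (ne_of_gt hp1), one_mul, one_div]
    have h6 : c ≤ (x^a)⁻¹ := by
      rw [hc]
      exact inv_anti₀ hra (Real.rpow_le_rpow hx0.le hx.2 ha0)
    linarith [h5 ▸ h3]
  have hHanti : AntitoneOn (fun r => z r + c * r) (Icc R (R+1)) := by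
    apply myAntitoneOn (convex_Icc R (R+1)) (f' := fun x => Z' x + c)
    · intro x hx
      have hd : HasDerivAt (fun y : ℝ => c * y) c x := by
        simpa using (hasDerivAt_id x).const_mul c
      exact (hzD x hx).add hd
    · exact hZ'le
  have hmemR : R ∈ Icc R (R+1) := ⟨le_refl R, by linarith⟩
  have hmemR1 : (R+1) ∈ Icc R (R+1) := ⟨by linarith, le_refl _⟩
  have hfin : z (R+1) + c*(R+1) ≤ z R + c*R := hHanti hmemR hmemR1 (by linarith)
  have hzRp1 : 0 < z (R+1) := by
    have hh := hwneg (R+1) hmemR1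
    rw [hzdef]
    exact rpow_pos_of_pos (by linarith) _
  have hzR : z R ≤ c := by
    have hmwR : (R+1)^(θ-1) ≤ -w R := by linarith
    have h1 : (-w R)^(-(p-1)⁻¹) ≤ ((R+1)^(θ-1))^(-(p-1)⁻¹) :=
      Real.rpow_le_rpow_of_nonpos hR1pos hmwR
        (by simp [inv_nonneg.2 hp1.le] : -(p-1)⁻¹ ≤ 0)
    have h2 : ((R+1)^(θ-1))^(-(p-1)⁻¹) = c := by
      rw [← Real.rpow_mul (by linarith : (0:ℝ) ≤ R+1), hc, ha,
        ← Real.rpow_neg (by linarith : (0:ℝ) ≤ R+1)]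
      congr 1
      ring
    calc z R = (-w R)^(-(p-1)⁻¹) := by rw [hzdef]
      _ ≤ ((R+1)^(θ-1))^(-(p-1)⁻¹) := h1
      _ = c := h2
  linarith


/-- The solution `φ` of `(r^(θ-1)|φ'|^(p-2) φ')' + r^(θ-1)|φ|^(p-2) φ = 0`, `φ(0)=1`,
`φ'(0)=0` is oscillatory: for every `r > 0` there is `t > r` with `φ(t) = 0`. -/
theorem stmt_16 (p θ : ℝ) (hp : 2 ≤ p) (hθ : 1 ≤ θ) (φ φ' g' : ℝ → ℝ)
    (hφ : ∀ r, 0 ≤ r → HasDerivAt φ (φ' r) r)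
    (hφ'cont : ContinuousOn φ' (Set.Ici 0))
    (hg : ∀ r, 0 ≤ r →
      HasDerivAt (fun t => t ^ (θ - 1) * (|φ' t| ^ (p - 2) * φ' t)) (g' r) r)
    (hg'cont : ContinuousOn g' (Set.Ici 0))
    (hode : ∀ r, 0 ≤ r → g' r + r ^ (θ - 1) * (|φ r| ^ (p - 2) * φ r) = 0)
    (h0 : φ 0 = 1) (h0' : φ' 0 = 0) :
    ∀ r, 0 < r → ∃ t, r < t ∧ φ t = 0 := by
  intro r hr
  by_contra hcon
  push_neg at hcon
  set r1 : ℝ := max (r+1) 1 with hr1def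
  have hr1r : r < r1 := lt_of_lt_of_le (by linarith) (le_max_left _ _)
  have hr11 : (1:ℝ) ≤ r1 := le_max_right _ _
  have hge0 : ∀ t, r1 ≤ t → (0:ℝ) ≤ t := fun t ht => le_trans (by linarith) ht
  have hcont : ∀ t, r1 ≤ t → ContinuousAt φ t := fun t ht => (hφ t (hge0 t ht)).continuousAt
  have hne : ∀ t, r1 ≤ t → φ t ≠ 0 := fun t ht => hcon t (lt_of_lt_of_le hr1r ht)
  have hsign : (∀ t, r1 ≤ t → 0 < φ t) ∨ (∀ t, r1 ≤ t → φ t < 0) := by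
    rcases lt_or_gt_of_ne (hne r1 le_rfl) with hneg | hpos
    · right
      intro t ht
      rcases lt_or_gt_of_ne (hne t ht) with h | h
      · exact h
      · exfalso
        have hlt : r1 < t := by
          rcases eq_or_lt_of_le ht with he | hl
          · exfalso; rw [← he] at h; linarith
          · exact hl
        have hcont2 : ContinuousOn φ (Set.Icc r1 t) :=
          fun x hx => (hcont x hx.1).continuousWithinAt
        have h0mem : (0:ℝ) ∈ Set.Icc (φ r1) (φ t) := ⟨le_of_lt hneg, le_of_lt h⟩
        obtain ⟨x, hx, hx0⟩ := intermediate_value_Icc (le_of_lt hlt) hcont2 h0mem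
        exact hne x hx.1 hx0
    · left
      intro t ht
      rcases lt_or_gt_of_ne (hne t ht) with h | h
      · exfalso
        have hlt : r1 < t := by
          rcases eq_or_lt_of_le ht with he | hl
          · exfalso; rw [← he] at h; linarith
          · exact hl
        have hcont2 : ContinuousOn φ (Set.Icc r1 t) :=
          fun x hx => (hcont x hx.1).continuousWithinAt
        have h0mem : (0:ℝ) ∈ Set.Icc (φ t) (φ r1) := ⟨le_of_lt h, le_of_lt hpos⟩
        obtain ⟨x, hx, hx0⟩ := intermediate_value_Icc' (le_of_lt hlt) hcont2 h0mem
        exact hne x hx.1 hx0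
      · exact h
  rcases hsign with hsp | hsn
  · exact core p θ hp hθ φ φ' g' r1 hr11
      (fun s hs => hφ s (hge0 s hs)) (fun s hs => hg s (hge0 s hs))
      (fun s hs => hode s (hge0 s hs)) hsp
  · apply core p θ hp hθ (fun t => -φ t) (fun t => -φ' t) (fun t => -g' t) r1 hr11
    · intro s hs
      exact (hφ s (hge0 s hs)).neg
    · intro s hs
      have heq : (fun t => t^(θ-1) * (|-φ' t|^(p-2) * (-φ' t)))
          = fun t => -(t^(θ-1) * (|φ' t|^(p-2) * φ' t)) := by
        funext t
        rw [abs_neg]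
        ring
      show HasDerivAt (fun t => t^(θ-1) * (|-φ' t|^(p-2) * (-φ' t))) (-g' s) s
      rw [heq]
      exact (hg s (hge0 s hs)).neg
    · intro s hs
      have h := hode s (hge0 s hs)
      show -g' s + s^(θ-1) * (|-φ s|^(p-2) * (-φ s)) = 0
      rw [abs_neg]
      linear_combination -h
    · intro s hs
      have := hsn s hs
      simp only [neg_pos]
      linarith
end
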